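/- arXiv:math/0606440 — 2 statements merged into one kernel-verified Lean document; each statement's English description precedes it below -/
import Mathlib

section
/- For every x ∈ (0,1), the jump of φ'/φ across the branch cut [0,1] equals 2πi times the density w: lim_{ε→0⁺} [ φ'(x+iε)/φ(x+iε) − φ'(x−iε)/φ(x−iε) ] = 2πi·w(x), where w(x) = (√3/(4π))·((1+√(1−x))^{1/3} + (1−√(1−x))^{1/3})/(x^{2/3}·√(1−x)) with real roots of positive reals. -/
open Filter Topology Polynomial Complex

/-- Argument in `[0, 2π)`. -/
noncomputable def argNN (z : ℂ) : ℝ :=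
  if Complex.arg z < 0 then Complex.arg z + 2 * Real.pi else Complex.arg z

/-- Square root with branch cut along the positive real axis:
`ρ e^{iθ} ↦ ρ^{1/2} e^{iθ/2}` with `θ ∈ [0, 2π)`. -/
noncomputable def csqrt (z : ℂ) : ℂ :=
  ((‖z‖ ^ ((1 : ℝ) / 2) : ℝ) : ℂ) * Complex.exp (Complex.I * (argNN z : ℂ) / 2)

/-- Principal cube root: `ρ e^{iθ} ↦ ρ^{1/3} e^{iθ/3}` with `θ ∈ (−π, π]`. -/
noncomputable def ccbrt (z : ℂ) : ℂ :=
  ((‖z‖ ^ ((1 : ℝ) / 3) : ℝ) : ℂ) * Complex.exp (Complex.I * (Complex.arg z : ℂ) / 3)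

/-- `ω₃ = e^{2πi/3}`. -/
noncomputable def ω₃ : ℂ := Complex.exp (2 * (Real.pi : ℂ) * Complex.I / 3)

/-- The function `φ` from the paper. -/
noncomputable def phi (z : ℂ) : ℂ :=
  (27 / 4) * ((3 * ω₃ / 2) * ccbrt z *
    (ω₃ * ccbrt (-1 + csqrt (1 - z)) + ccbrt (-1 - csqrt (1 - z))) - 1)

/-- The density `w` of the measure `υ_{[0,1]}`. -/
noncomputable def w (x : ℝ) : ℝ :=
  (Real.sqrt 3 / (4 * Real.pi)) *
    (((1 + Real.sqrt (1 - x)) ^ ((1 : ℝ) / 3) + (1 - Real.sqrt (1 - x)) ^ ((1 : ℝ) / 3)) /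
      (x ^ ((2 : ℝ) / 3) * Real.sqrt (1 - x)))

/-- For `z ≠ 0` and real `r`, principal cpow in polar form. -/
lemma cpow_real_eq {z : ℂ} (hz : z ≠ 0) (r : ℝ) :
    z ^ (r : ℂ) = ((‖z‖ ^ r : ℝ) : ℂ) * Complex.exp (Complex.I * (Complex.arg z : ℂ) * r) := by
  rw [Complex.cpow_def_of_ne_zero hz, Complex.log]
  rw [show (↑(Real.log ‖z‖) + ↑(Complex.arg z) * Complex.I) * (r : ℂ)
      = ↑(Real.log ‖z‖ * r) + Complex.I * ↑(Complex.arg z) * ↑r by push_cast; ring]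
  rw [Complex.exp_add]
  congr 1
  rw [← Complex.ofReal_exp]
  norm_cast
  rw [Real.rpow_def_of_pos (norm_pos_iff.mpr hz)]

lemma ccbrt_eq {z : ℂ} (hz : z ≠ 0) : ccbrt z = z ^ ((1 : ℂ)/3) := by
  rw [show ((1:ℂ)/3) = (((1:ℝ)/3 : ℝ) : ℂ) by push_cast; ring, cpow_real_eq hz]
  rw [ccbrt]
  congr 1
  rw [show Complex.I * (Complex.arg z : ℂ) * ((1:ℝ)/3 : ℝ) = Complex.I * (Complex.arg z : ℂ) / 3 by push_cast; ring]

lemma csqrt_of_arg_nonneg {z : ℂ} (hz : z ≠ 0) (h : 0 ≤ Complex.arg z) :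
    csqrt z = z ^ ((1 : ℂ)/2) := by
  rw [show ((1:ℂ)/2) = (((1:ℝ)/2 : ℝ) : ℂ) by push_cast; ring, cpow_real_eq hz]
  rw [csqrt, argNN, if_neg (not_lt.2 h)]
  congr 1
  rw [show Complex.I * (Complex.arg z : ℂ) * ((1:ℝ)/2 : ℝ) = Complex.I * (Complex.arg z : ℂ) / 2 by push_cast; ring]

lemma csqrt_of_arg_neg {z : ℂ} (h : Complex.arg z < 0) :
    csqrt z = -(z ^ ((1 : ℂ)/2)) := by
  have hz : z ≠ 0 := by
    intro h0; rw [h0, Complex.arg_zero] at h; exact lt_irrefl 0 h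
  rw [show ((1:ℂ)/2) = (((1:ℝ)/2 : ℝ) : ℂ) by push_cast; ring, cpow_real_eq hz]
  rw [csqrt, argNN, if_pos h]
  rw [show Complex.I * ((↑(Complex.arg z + 2 * Real.pi)) : ℂ) / 2
      = Complex.I * (Complex.arg z : ℂ) * ((1:ℝ)/2 : ℝ) + Real.pi * Complex.I by push_cast; ring]
  rw [Complex.exp_add, Complex.exp_pi_mul_I]
  ring

/-- negation and cpow, approaching from below -/
lemma neg_cpow_of_im_neg {w : ℂ} (hw : w.im < 0) (c : ℂ) :
    (-w) ^ c = Complex.exp ((Real.pi : ℂ) * Complex.I * c) * w ^ c := by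
  have hw0 : w ≠ 0 := by intro h; rw [h] at hw; simp at hw
  have hnw0 : -w ≠ 0 := neg_ne_zero.2 hw0
  rw [Complex.cpow_def_of_ne_zero hw0, Complex.cpow_def_of_ne_zero hnw0, ← Complex.exp_add]
  congr 1
  rw [Complex.log, Complex.log, Complex.arg_neg_eq_arg_add_pi_of_im_neg hw, norm_neg]
  push_cast
  ring

lemma neg_cpow_of_im_pos {w : ℂ} (hw : 0 < w.im) (c : ℂ) :
    (-w) ^ c = Complex.exp (-((Real.pi : ℂ) * Complex.I * c)) * w ^ c := by
  have hw0 : w ≠ 0 := by intro h; rw [h] at hw; simp at hw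
  have hnw0 : -w ≠ 0 := neg_ne_zero.2 hw0
  rw [Complex.cpow_def_of_ne_zero hw0, Complex.cpow_def_of_ne_zero hnw0, ← Complex.exp_add]
  congr 1
  rw [Complex.log, Complex.log, Complex.arg_neg_eq_arg_sub_pi_of_im_pos hw, norm_neg]
  push_cast
  ring

noncomputable def sq1 (z : ℂ) : ℂ := (1 - z) ^ ((1 : ℂ)/2)

noncomputable def Fp (z : ℂ) : ℂ :=
  27/4 * (3 * ω₃ / 2 * z ^ ((1:ℂ)/3) *
    (ω₃ * (-1 - sq1 z) ^ ((1:ℂ)/3) + (-1 + sq1 z) ^ ((1:ℂ)/3)) - 1)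

noncomputable def Dp (z : ℂ) : ℂ :=
  27/4 * (3 * ω₃ / 2) *
    ((1/3 * z ^ ((1:ℂ)/3 - 1)) * (ω₃ * (-1 - sq1 z) ^ ((1:ℂ)/3) + (-1 + sq1 z) ^ ((1:ℂ)/3))
      + z ^ ((1:ℂ)/3) *
        (ω₃ * (1/3 * (-1 - sq1 z) ^ ((1:ℂ)/3 - 1) * (1/2 * (1 - z) ^ ((1:ℂ)/2 - 1)))
          + 1/3 * (-1 + sq1 z) ^ ((1:ℂ)/3 - 1) * (-(1/2 * (1 - z) ^ ((1:ℂ)/2 - 1)))))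

lemma sq1_mul_self {z : ℂ} (hz : z.im ≠ 0) : sq1 z * sq1 z = 1 - z := by
  have h0 : (1 : ℂ) - z ≠ 0 := by
    intro h; apply hz
    have := congrArg Complex.im h
    simp at this; linarith
  rw [sq1, ← Complex.cpow_add _ _ h0]
  norm_num

lemma im_sq1_ne {z : ℂ} (hz : z.im ≠ 0) : (sq1 z).im ≠ 0 := by
  intro h
  have := sq1_mul_self hz
  have h2 := congrArg Complex.im this
  rw [Complex.mul_im, h] at h2
  simp at h2
  exact hz (by linarith)

lemma im_sq1_neg {z : ℂ} (hz : 0 < z.im) : (sq1 z).im < 0 := by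
  have h0 : (1 : ℂ) - z ≠ 0 := by
    intro h; have := congrArg Complex.im h; simp at this; linarith
  have harg : Complex.arg (1 - z) < 0 := Complex.arg_neg_iff.2 (by simp; linarith)
  rw [sq1, Complex.cpow_def_of_ne_zero h0, Complex.exp_im]
  apply mul_neg_of_pos_of_neg (Real.exp_pos _)
  have him : (Complex.log (1 - z) * ((1:ℂ)/2)).im = Complex.arg (1 - z) / 2 := by
    rw [Complex.mul_im, Complex.log_im]
    simp
    ring
  rw [him]
  apply Real.sin_neg_of_neg_of_neg_pi_lt (by linarith)
  have := Complex.neg_pi_lt_arg (1 - z)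
  have hpi := Real.pi_pos
  linarith

lemma omega_cubed : ω₃ ^ 3 = 1 := by
  rw [ω₃, ← Complex.exp_nat_mul]
  rw [show ((3:ℕ) : ℂ) * (2 * (Real.pi : ℂ) * Complex.I / 3) = 2 * Real.pi * Complex.I by push_cast; ring]
  exact Complex.exp_two_pi_mul_I

lemma conj_omega : (starRingEnd ℂ) ω₃ = ω₃ ^ 2 := by
  rw [ω₃, ← Complex.exp_conj, ← Complex.exp_nat_mul]
  rw [show ((2:ℕ):ℂ) * (2 * (Real.pi : ℂ) * Complex.I / 3)
      = (starRingEnd ℂ) (2 * (Real.pi : ℂ) * Complex.I / 3) + 2 * Real.pi * Complex.I by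
    simp [map_div₀, map_ofNat, Complex.conj_I, Complex.conj_ofReal]; ring]
  rw [Complex.exp_add, Complex.exp_two_pi_mul_I, mul_one]

lemma phi_eq_Fp {z : ℂ} (hz : 0 < z.im) : phi z = Fp z := by
  have h0 : (1 : ℂ) - z ≠ 0 := by
    intro h; have := congrArg Complex.im h; simp at this; linarith
  have hz0 : z ≠ 0 := by intro h; rw [h] at hz; simp at hz
  have harg : Complex.arg (1 - z) < 0 := Complex.arg_neg_iff.2 (by simp; linarith)
  have hcs : csqrt (1 - z) = -sq1 z := by rw [csqrt_of_arg_neg harg, sq1]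
  have hs := im_sq1_ne (ne_of_gt hz)
  rw [phi, Fp, hcs, ccbrt_eq hz0]
  rw [show (-1 : ℂ) + -sq1 z = -1 - sq1 z by ring, show (-1 : ℂ) - -sq1 z = -1 + sq1 z by ring]
  have hne1 : ((-1 : ℂ) - sq1 z) ≠ 0 := fun h => hs (by have := congrArg Complex.im h; simp at this; linarith)
  have hne2 : ((-1 : ℂ) + sq1 z) ≠ 0 := fun h => hs (by have := congrArg Complex.im h; simp at this; linarith)
  rw [ccbrt_eq hne1, ccbrt_eq hne2]

lemma phi_eq_conj_Fp {z : ℂ} (hz : z.im < 0) : phi z = (starRingEnd ℂ) (Fp ((starRingEnd ℂ) z)) := by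
  have hzim : z.im ≠ 0 := ne_of_lt hz
  have h0 : (1 : ℂ) - z ≠ 0 := by
    intro h; have := congrArg Complex.im h; simp at this; linarith
  have hz0 : z ≠ 0 := by intro h; rw [h] at hz; simp at hz
  have harg : 0 ≤ Complex.arg (1 - z) := by
    by_contra h
    push_neg at h
    have := Complex.arg_neg_iff.1 h
    simp at this; linarith
  have hcs : csqrt (1 - z) = sq1 z := by rw [csqrt_of_arg_nonneg h0 harg, sq1]
  have hs := im_sq1_ne hzim
  have hne1 : ((-1 : ℂ) - sq1 z) ≠ 0 := fun h => hs (by have := congrArg Complex.im h; simp at this; linarith)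
  have hne2 : ((-1 : ℂ) + sq1 z) ≠ 0 := fun h => hs (by have := congrArg Complex.im h; simp at this; linarith)
  -- conj commutes with these cpows
  have hargz : Complex.arg z ≠ Real.pi := by
    intro h; obtain ⟨-, h2⟩ := Complex.arg_eq_pi_iff.1 h; exact hzim h2
  have harg1z : Complex.arg (1 - z) ≠ Real.pi := by
    intro h; obtain ⟨-, h2⟩ := Complex.arg_eq_pi_iff.1 h; simp at h2; exact hzim (by linarith)
  have hhalf : (starRingEnd ℂ) ((1:ℂ)/2) = (1:ℂ)/2 := by
    rw [show (1/2 : ℂ) = ((1/2 : ℝ) : ℂ) by norm_num, Complex.conj_ofReal]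
  have hthird : (starRingEnd ℂ) ((1:ℂ)/3) = (1:ℂ)/3 := by
    rw [show (1/3 : ℂ) = ((1/3 : ℝ) : ℂ) by norm_num, Complex.conj_ofReal]
  have hsq1conj : sq1 ((starRingEnd ℂ) z) = (starRingEnd ℂ) (sq1 z) := by
    rw [sq1, sq1, show (1 : ℂ) - (starRingEnd ℂ) z = (starRingEnd ℂ) (1 - z) by simp, ← hhalf,
      ← Complex.conj_cpow _ _ harg1z, hhalf]
  have hA : ((starRingEnd ℂ) z) ^ ((1:ℂ)/3) = (starRingEnd ℂ) (z ^ ((1:ℂ)/3)) := by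
    rw [← hthird, ← Complex.conj_cpow _ _ hargz, hthird]
  have hargB : Complex.arg ((-1 : ℂ) - sq1 z) ≠ Real.pi := by
    intro h; obtain ⟨-, h2⟩ := Complex.arg_eq_pi_iff.1 h; apply hs; simp at h2; linarith
  have hargC : Complex.arg ((-1 : ℂ) + sq1 z) ≠ Real.pi := by
    intro h; obtain ⟨-, h2⟩ := Complex.arg_eq_pi_iff.1 h; apply hs; simp at h2; linarith
  have hB : ((-1 : ℂ) - sq1 ((starRingEnd ℂ) z)) ^ ((1:ℂ)/3)
      = (starRingEnd ℂ) (((-1 : ℂ) - sq1 z) ^ ((1:ℂ)/3)) := by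
    rw [hsq1conj, show (-1 : ℂ) - (starRingEnd ℂ) (sq1 z) = (starRingEnd ℂ) (-1 - sq1 z) by simp,
      ← hthird, ← Complex.conj_cpow _ _ hargB, hthird]
  have hC : ((-1 : ℂ) + sq1 ((starRingEnd ℂ) z)) ^ ((1:ℂ)/3)
      = (starRingEnd ℂ) (((-1 : ℂ) + sq1 z) ^ ((1:ℂ)/3)) := by
    rw [hsq1conj, show (-1 : ℂ) + (starRingEnd ℂ) (sq1 z) = (starRingEnd ℂ) (-1 + sq1 z) by simp,
      ← hthird, ← Complex.conj_cpow _ _ hargC, hthird]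
  rw [phi, hcs, Fp, hA, hB, hC, ccbrt_eq hz0]
  rw [show (-1 : ℂ) + sq1 z = -1 - -sq1 z by ring] at hne2
  rw [show (-1 : ℂ) + sq1 z = -1 - -sq1 z by ring, ccbrt_eq hne2,
    show (-1 : ℂ) - -sq1 z = -1 + sq1 z by ring]
  rw [show (-1 : ℂ) - sq1 z = -1 + -sq1 z by ring] at hne1
  rw [show (-1 : ℂ) - sq1 z = -1 + -sq1 z by ring, ccbrt_eq hne1,
    show (-1 : ℂ) + -sq1 z = -1 - sq1 z by ring]
  simp only [map_mul, map_sub, map_add, map_div₀, map_ofNat, map_one, Complex.conj_conj, conj_omega]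
  have h3 := omega_cubed
  set A := z ^ ((1:ℂ)/3)
  set B := ((-1 : ℂ) - sq1 z) ^ ((1:ℂ)/3)
  set C := ((-1 : ℂ) + sq1 z) ^ ((1:ℂ)/3)
  linear_combination (-(81/8 : ℂ) * A * B * ω₃) * h3

/-- derivative of the conjugate-reflected function -/
lemma hasDerivAt_conj_conj {f : ℂ → ℂ} {d z : ℂ} (h : HasDerivAt f d z) :
    HasDerivAt (fun w => (starRingEnd ℂ) (f ((starRingEnd ℂ) w))) ((starRingEnd ℂ) d)
      ((starRingEnd ℂ) z) := by
  rw [hasDerivAt_iff_tendsto_slope] at h ⊢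
  have hconj : Tendsto (fun w : ℂ => (starRingEnd ℂ) w)
      (𝓝[≠] ((starRingEnd ℂ) z)) (𝓝[≠] z) := by
    apply tendsto_nhdsWithin_of_tendsto_nhds_of_eventually_within
    · have hcc : Tendsto (fun w : ℂ => (starRingEnd ℂ) w) (𝓝 ((starRingEnd ℂ) z)) (𝓝 z) := by
        have := Complex.continuous_conj.tendsto ((starRingEnd ℂ) z)
        simpa using this
      exact hcc.mono_left nhdsWithin_le_nhds
    · filter_upwards [eventually_mem_nhdsWithin] with w hw
      simp only [Set.mem_compl_iff, Set.mem_singleton_iff] at hw ⊢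
      intro hc
      apply hw
      have := congrArg (starRingEnd ℂ) hc
      simpa using this
  have h2 : Tendsto (fun w => (starRingEnd ℂ) (slope f z ((starRingEnd ℂ) w)))
      (𝓝[≠] ((starRingEnd ℂ) z)) (𝓝 ((starRingEnd ℂ) d)) :=
    (Complex.continuous_conj.tendsto d).comp (h.comp hconj)
  apply h2.congr'
  filter_upwards [eventually_mem_nhdsWithin] with w hw
  simp only [slope_def_field]
  rw [map_div₀, map_sub, map_sub, Complex.conj_conj, Complex.conj_conj]

lemma hasDerivAt_Fp {z : ℂ} (hz : z.im ≠ 0) : HasDerivAt Fp (Dp z) z := by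
  have h1z : (1 : ℂ) - z ≠ 0 := by
    intro h; have := congrArg Complex.im h; simp at this; exact hz (by linarith)
  have hslit1 : (1 : ℂ) - z ∈ Complex.slitPlane := Or.inr (by simp; exact fun h => hz (by linarith))
  have hslitz : z ∈ Complex.slitPlane := Or.inr hz
  have hs := im_sq1_ne hz
  have hslitB : (-1 : ℂ) - sq1 z ∈ Complex.slitPlane := Or.inr (by simp; exact fun h => hs (by linarith))
  have hslitC : (-1 : ℂ) + sq1 z ∈ Complex.slitPlane := Or.inr (by simp; exact hs)
  have hds : HasDerivAt sq1 ((1:ℂ)/2 * (1 - z) ^ ((1:ℂ)/2 - 1) * (-1)) z := by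
    have hinner : HasDerivAt (fun w : ℂ => 1 - w) (-1 : ℂ) z := by
      simpa using (hasDerivAt_id z).const_sub (1 : ℂ)
    exact hinner.cpow_const hslit1
  have hdB : HasDerivAt (fun w => ((-1 : ℂ) - sq1 w) ^ ((1:ℂ)/3))
      ((1:ℂ)/3 * ((-1 : ℂ) - sq1 z) ^ ((1:ℂ)/3 - 1) * (-((1:ℂ)/2 * (1 - z) ^ ((1:ℂ)/2 - 1) * (-1)))) z :=
    (hds.const_sub (-1 : ℂ)).cpow_const hslitB
  have hdC : HasDerivAt (fun w => ((-1 : ℂ) + sq1 w) ^ ((1:ℂ)/3))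
      ((1:ℂ)/3 * ((-1 : ℂ) + sq1 z) ^ ((1:ℂ)/3 - 1) * ((1:ℂ)/2 * (1 - z) ^ ((1:ℂ)/2 - 1) * (-1))) z :=
    (hds.const_add (-1 : ℂ)).cpow_const hslitC
  have hdA : HasDerivAt (fun w : ℂ => w ^ ((1:ℂ)/3)) ((1:ℂ)/3 * z ^ ((1:ℂ)/3 - 1)) z := by
    simpa using (Complex.hasStrictDerivAt_cpow_const (c := (1:ℂ)/3) hslitz).hasDerivAt
  have hsum : HasDerivAt (fun w => ω₃ * ((-1 : ℂ) - sq1 w) ^ ((1:ℂ)/3) + ((-1 : ℂ) + sq1 w) ^ ((1:ℂ)/3))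
      (ω₃ * ((1:ℂ)/3 * ((-1 : ℂ) - sq1 z) ^ ((1:ℂ)/3 - 1) * (-((1:ℂ)/2 * (1 - z) ^ ((1:ℂ)/2 - 1) * (-1))))
        + (1:ℂ)/3 * ((-1 : ℂ) + sq1 z) ^ ((1:ℂ)/3 - 1) * ((1:ℂ)/2 * (1 - z) ^ ((1:ℂ)/2 - 1) * (-1))) z :=
    (hdB.const_mul ω₃).add hdC
  have hprod := hdA.mul hsum
  have := ((hprod.const_mul (3 * ω₃ / 2)).sub_const 1).const_mul (27/4 : ℂ)
  refine (this.congr_of_eventuallyEq (Filter.Eventually.of_forall fun w => ?_)).congr_deriv ?_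
  · simp only [Fp, Pi.mul_apply]
    ring
  · rw [Dp]
    ring

noncomputable def eπ (c : ℂ) : ℂ := Complex.exp ((Real.pi : ℂ) * Complex.I * c)

noncomputable def Fc (w : ℂ) : ℂ :=
  27/4 * (3 * ω₃ / 2 * w ^ ((1:ℂ)/3) *
    (ω₃ * (eπ ((1:ℂ)/3) * (1 + sq1 w) ^ ((1:ℂ)/3)) + eπ (-((1:ℂ)/3)) * (1 - sq1 w) ^ ((1:ℂ)/3)) - 1)

noncomputable def Gc (w : ℂ) : ℂ :=
  27/4 * (3 * ω₃ / 2) *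
    ((1/3 * w ^ ((1:ℂ)/3 - 1)) *
        (ω₃ * (eπ ((1:ℂ)/3) * (1 + sq1 w) ^ ((1:ℂ)/3)) + eπ (-((1:ℂ)/3)) * (1 - sq1 w) ^ ((1:ℂ)/3))
      + w ^ ((1:ℂ)/3) *
        (ω₃ * (1/3 * (eπ ((1:ℂ)/3 - 1) * (1 + sq1 w) ^ ((1:ℂ)/3 - 1)) * (1/2 * (1 - w) ^ ((1:ℂ)/2 - 1)))
          + 1/3 * (eπ (-((1:ℂ)/3 - 1)) * (1 - sq1 w) ^ ((1:ℂ)/3 - 1)) * (-(1/2 * (1 - w) ^ ((1:ℂ)/2 - 1)))))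

lemma rewrite_pair {z : ℂ} (hz : 0 < z.im) (c : ℂ) :
    ((-1 : ℂ) - sq1 z) ^ c = eπ c * (1 + sq1 z) ^ c
      ∧ ((-1 : ℂ) + sq1 z) ^ c = eπ (-c) * (1 - sq1 z) ^ c := by
  have h1 : ((1 : ℂ) + sq1 z).im < 0 := by simp [im_sq1_neg hz]
  have h2 : (0:ℝ) < ((1 : ℂ) - sq1 z).im := by simp; nlinarith [im_sq1_neg hz]
  constructor
  · rw [show (-1 : ℂ) - sq1 z = -(1 + sq1 z) by ring, neg_cpow_of_im_neg h1, eπ]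
  · rw [show (-1 : ℂ) + sq1 z = -(1 - sq1 z) by ring, neg_cpow_of_im_pos h2, eπ]
    congr 2
    ring

lemma Fp_eq_Fc {z : ℂ} (hz : 0 < z.im) : Fp z = Fc z := by
  rw [Fp, Fc, (rewrite_pair hz ((1:ℂ)/3)).1, (rewrite_pair hz ((1:ℂ)/3)).2]

lemma Dp_eq_Gc {z : ℂ} (hz : 0 < z.im) : Dp z = Gc z := by
  rw [Dp, Gc, (rewrite_pair hz ((1:ℂ)/3)).1, (rewrite_pair hz ((1:ℂ)/3)).2,
    (rewrite_pair hz ((1:ℂ)/3 - 1)).1, (rewrite_pair hz ((1:ℂ)/3 - 1)).2]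

/-- evaluation of `eπ` at a real argument -/
lemma eπ_real (r : ℝ) : eπ ((r : ℝ) : ℂ) = ((Real.cos (Real.pi * r) : ℝ) : ℂ) + ((Real.sin (Real.pi * r) : ℝ) : ℂ) * Complex.I := by
  rw [eπ, show (Real.pi : ℂ) * Complex.I * (r : ℂ) = ((Real.pi * r : ℝ) : ℂ) * Complex.I by push_cast; ring,
    Complex.exp_mul_I, Complex.ofReal_cos, Complex.ofReal_sin]

lemma eπ_third : eπ ((1:ℂ)/3) = (1 + (Real.sqrt 3 : ℂ) * Complex.I) / 2 := by
  rw [show ((1:ℂ)/3) = (((1:ℝ)/3 : ℝ) : ℂ) by push_cast; ring, eπ_real]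
  rw [show Real.pi * (1/3) = Real.pi / 3 by ring, Real.cos_pi_div_three, Real.sin_pi_div_three]
  push_cast
  ring

lemma eπ_neg_third : eπ (-((1:ℂ)/3)) = (1 - (Real.sqrt 3 : ℂ) * Complex.I) / 2 := by
  rw [show (-((1:ℂ)/3)) = ((-(1/3) : ℝ) : ℂ) by push_cast; ring, eπ_real]
  rw [show Real.pi * (-(1/3)) = -(Real.pi / 3) by ring, Real.cos_neg, Real.sin_neg,
    Real.cos_pi_div_three, Real.sin_pi_div_three]
  push_cast
  ring

lemma eπ_third_sub_one : eπ ((1:ℂ)/3 - 1) = (-1 - (Real.sqrt 3 : ℂ) * Complex.I) / 2 := by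
  rw [show ((1:ℂ)/3 - 1) = ((-(2/3) : ℝ) : ℂ) by push_cast; ring, eπ_real]
  rw [show Real.pi * (-(2/3)) = -(Real.pi - Real.pi / 3) by ring, Real.cos_neg, Real.sin_neg,
    Real.cos_pi_sub, Real.sin_pi_sub, Real.cos_pi_div_three, Real.sin_pi_div_three]
  push_cast
  ring

lemma eπ_neg_third_sub_one : eπ (-((1:ℂ)/3 - 1)) = (-1 + (Real.sqrt 3 : ℂ) * Complex.I) / 2 := by
  rw [show (-((1:ℂ)/3 - 1)) = (((2:ℝ)/3 : ℝ) : ℂ) by push_cast; ring, eπ_real]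
  rw [show Real.pi * (2/3) = Real.pi - Real.pi / 3 by ring,
    Real.cos_pi_sub, Real.sin_pi_sub, Real.cos_pi_div_three, Real.sin_pi_div_three]
  push_cast
  ring

lemma omega_eq : ω₃ = (-1 + (Real.sqrt 3 : ℂ) * Complex.I) / 2 := by
  rw [← eπ_neg_third_sub_one, ω₃, eπ]
  congr 1
  ring

lemma F0_alg (p q t : ℝ) (ht : t^2 = 3) :
    (27/4 * (3 * ((-1 + (t:ℂ)*Complex.I)/2) / 2 * ((p:ℂ)*(q:ℂ)) *
      (((-1 + (t:ℂ)*Complex.I)/2) * (((1 + (t:ℂ)*Complex.I)/2) * (q:ℂ))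
        + ((1 - (t:ℂ)*Complex.I)/2) * (p:ℂ)) - 1) : ℂ)
    = (((27/4*((3/4)*(p*q)*(p+q) - 1) : ℝ)) : ℂ) + (((81/16*(p*q)*t*(p-q) : ℝ)) : ℂ)*Complex.I := by
  have htC : (t:ℂ)^2 = 3 := by
    rw [show ((t:ℂ))^2 = ((t^2 : ℝ) : ℂ) by push_cast; ring, ht]; norm_num
  push_cast
  linear_combination ((-81/64)*(p:ℂ)*(q:ℂ)^2*(t:ℂ)^2 + (81/64)*(p:ℂ)*(q:ℂ)^2*(t:ℂ)^3*Complex.I + (-81/32)*(p:ℂ)^2*(q:ℂ)*(t:ℂ)^2) * Complex.I_sq + ((81/64)*(p:ℂ)*(q:ℂ)^2 + (-81/64)*(p:ℂ)*(q:ℂ)^2*(t:ℂ)*Complex.I + (81/32)*(p:ℂ)^2*(q:ℂ)) * htC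

lemma F0_ne_zero (σ p q t : ℝ) (hσ0 : 0 < σ)
    (hp0 : 0 < p) (hq0 : 0 < q) (hp3 : p^3 = 1 - σ) (hq3 : q^3 = 1 + σ)
    (ht : t^2 = 3) (ht0 : 0 < t) :
    (27/4 * (3 * ((-1 + (t:ℂ)*Complex.I)/2) / 2 * ((p:ℂ)*(q:ℂ)) *
      (((-1 + (t:ℂ)*Complex.I)/2) * (((1 + (t:ℂ)*Complex.I)/2) * (q:ℂ))
        + ((1 - (t:ℂ)*Complex.I)/2) * (p:ℂ)) - 1) : ℂ) ≠ 0 := by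
  rw [F0_alg p q t ht]
  intro h
  have hplt : p < q := by
    by_contra hc
    push_neg at hc
    have := pow_le_pow_left₀ hq0.le hc 3
    rw [hp3, hq3] at this
    linarith
  have him := congrArg Complex.im h
  simp at him
  rcases him with ((h'|h')|h')|h' <;> linarith

lemma ne_zero_add_mul_I (u v : ℝ) (hu : u ≠ 0) : ((u:ℂ) + (v:ℂ)*Complex.I) ≠ 0 := by
  intro h
  apply hu
  simpa using congrArg Complex.re h

lemma ne_zero_sub_mul_I (u v : ℝ) (hu : u ≠ 0) : ((u:ℂ) - (v:ℂ)*Complex.I) ≠ 0 := by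
  intro h
  apply hu
  simpa using congrArg Complex.re h

lemma jump_formula (u v : ℝ) (hu : u ≠ 0) :
    1/((u:ℂ)+(v:ℂ)*Complex.I) - 1/((u:ℂ)-(v:ℂ)*Complex.I)
      = (-2*(v:ℂ)*Complex.I)/(((u^2+v^2 : ℝ)):ℂ) := by
  have hpos : 0 < u^2 + v^2 := by nlinarith [sq_nonneg v, mul_self_pos.2 hu, sq_nonneg u]
  have h1 : (u:ℂ)+(v:ℂ)*Complex.I ≠ 0 := ne_zero_add_mul_I u v hu
  have h2 : (u:ℂ)-(v:ℂ)*Complex.I ≠ 0 := ne_zero_sub_mul_I u v hu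
  have h3 : (((u^2+v^2 : ℝ)):ℂ) ≠ 0 := Complex.ofReal_ne_zero.2 (ne_of_gt hpos)
  rw [div_sub_div _ _ h1 h2, div_eq_div_iff (mul_ne_zero h1 h2) h3]
  push_cast
  linear_combination (-2*(v:ℂ)^3*Complex.I) * Complex.I_sq

set_option maxHeartbeats 4000000 in
lemma final_algebra (x σ p q t : ℝ) (hx0 : 0 < x) (hσ0 : 0 < σ) (hσ1 : σ < 1)
    (hp0 : 0 < p) (hq0 : 0 < q) (hp3 : p^3 = 1 - σ) (hq3 : q^3 = 1 + σ)
    (ht : t^2 = 3) (ht0 : 0 < t) (hxσ : σ^2 = 1 - x) :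
    ((27/4 * (3 * ((-1 + (t:ℂ)*Complex.I)/2) / 2) *
      ((1/3 * ((p:ℂ)*(q:ℂ)/(x:ℂ))) * (((-1 + (t:ℂ)*Complex.I)/2) * (((1 + (t:ℂ)*Complex.I)/2) * (q:ℂ))
          + ((1 - (t:ℂ)*Complex.I)/2) * (p:ℂ))
        + ((p:ℂ)*(q:ℂ)) * (((-1 + (t:ℂ)*Complex.I)/2) *
              (1/3 * ((((-1 - (t:ℂ)*Complex.I)/2)) * ((q:ℂ)/(1+(σ:ℂ)))) * (1/2 * ((σ:ℂ)/(1-(x:ℂ)))))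
            + 1/3 * ((((-1 + (t:ℂ)*Complex.I)/2)) * ((p:ℂ)/(1-(σ:ℂ)))) * (-(1/2 * ((σ:ℂ)/(1-(x:ℂ))))))) : ℂ)
    / (27/4 * (3 * ((-1 + (t:ℂ)*Complex.I)/2) / 2 * ((p:ℂ)*(q:ℂ)) *
      (((-1 + (t:ℂ)*Complex.I)/2) * (((1 + (t:ℂ)*Complex.I)/2) * (q:ℂ))
        + ((1 - (t:ℂ)*Complex.I)/2) * (p:ℂ)) - 1)))
    - (starRingEnd ℂ) ((27/4 * (3 * ((-1 + (t:ℂ)*Complex.I)/2) / 2) *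
      ((1/3 * ((p:ℂ)*(q:ℂ)/(x:ℂ))) * (((-1 + (t:ℂ)*Complex.I)/2) * (((1 + (t:ℂ)*Complex.I)/2) * (q:ℂ))
          + ((1 - (t:ℂ)*Complex.I)/2) * (p:ℂ))
        + ((p:ℂ)*(q:ℂ)) * (((-1 + (t:ℂ)*Complex.I)/2) *
              (1/3 * ((((-1 - (t:ℂ)*Complex.I)/2)) * ((q:ℂ)/(1+(σ:ℂ)))) * (1/2 * ((σ:ℂ)/(1-(x:ℂ)))))
            + 1/3 * ((((-1 + (t:ℂ)*Complex.I)/2)) * ((p:ℂ)/(1-(σ:ℂ)))) * (-(1/2 * ((σ:ℂ)/(1-(x:ℂ))))))))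
    / (27/4 * (3 * ((-1 + (t:ℂ)*Complex.I)/2) / 2 * ((p:ℂ)*(q:ℂ)) *
      (((-1 + (t:ℂ)*Complex.I)/2) * (((1 + (t:ℂ)*Complex.I)/2) * (q:ℂ))
        + ((1 - (t:ℂ)*Complex.I)/2) * (p:ℂ)) - 1)))
    = Complex.I * (t:ℂ) * ((q:ℂ) + (p:ℂ)) / (2 * ((p:ℂ)*(q:ℂ))^2 * (σ:ℂ)) := by
  have hplt : p < q := by
    by_contra hc
    push_neg at hc
    have := pow_le_pow_left₀ hq0.le hc 3
    rw [hp3, hq3] at this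
    linarith
  have htC : (t:ℂ)^2 = 3 := by
    rw [show ((t:ℂ))^2 = ((t^2 : ℝ) : ℂ) by push_cast; ring, ht]; norm_num
  have hp3C : (p:ℂ)^3 = 1 - (σ:ℂ) := by
    have := congrArg (fun r : ℝ => (r:ℂ)) hp3; push_cast at this; exact this
  have hq3C : (q:ℂ)^3 = 1 + (σ:ℂ) := by
    have := congrArg (fun r : ℝ => (r:ℂ)) hq3; push_cast at this; exact this
  have hxσC : (σ:ℂ)^2 = 1 - (x:ℂ) := by
    have := congrArg (fun r : ℝ => (r:ℂ)) hxσ; push_cast at this; exact this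
  have hXC : (x:ℂ) ≠ 0 := Complex.ofReal_ne_zero.2 (ne_of_gt hx0)
  have h1pS : (1:ℂ) + (σ:ℂ) ≠ 0 := by
    rw [show (1:ℂ) + (σ:ℂ) = ((1+σ : ℝ):ℂ) by push_cast; ring]
    exact Complex.ofReal_ne_zero.2 (by positivity)
  have h1mS : (1:ℂ) - (σ:ℂ) ≠ 0 := by
    rw [show (1:ℂ) - (σ:ℂ) = ((1-σ : ℝ):ℂ) by push_cast; ring]
    exact Complex.ofReal_ne_zero.2 (by intro h; nlinarith)
  have h1mX : (1:ℂ) - (x:ℂ) ≠ 0 := by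
    rw [show (1:ℂ) - (x:ℂ) = ((1-x : ℝ):ℂ) by push_cast; ring]
    have : 0 < 1 - x := by nlinarith
    exact Complex.ofReal_ne_zero.2 (ne_of_gt this)
  have hF0ne : (27/4 * (3 * ((-1 + (t:ℂ)*Complex.I)/2) / 2 * ((p:ℂ)*(q:ℂ)) *
      (((-1 + (t:ℂ)*Complex.I)/2) * (((1 + (t:ℂ)*Complex.I)/2) * (q:ℂ))
        + ((1 - (t:ℂ)*Complex.I)/2) * (p:ℂ)) - 1) : ℂ) ≠ 0 := F0_ne_zero σ p q t hσ0 hp0 hq0 hp3 hq3 ht ht0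
  set K : ℂ := ((p:ℂ)*(q:ℂ))^2 * (-(((p:ℂ)) - ((q:ℂ)))^2 + (t:ℂ)*(((p:ℂ))^2-((q:ℂ))^2)*Complex.I)/2 with hKdef
  have hKalg : K = (((-(p*q)^2*(p-q)^2/2 : ℝ)) : ℂ) + ((((p*q)^2*t*(p^2-q^2)/2 : ℝ)) : ℂ)*Complex.I := by
    rw [hKdef]; push_cast; ring
  have hu0 : -(p*q)^2*(p-q)^2/2 ≠ 0 := by
    have h1 : p*q*(p-q) ≠ 0 := by
      apply mul_ne_zero (by positivity)
      intro h; nlinarith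
    have h2 : 0 < (p*q*(p-q))^2 := by positivity
    nlinarith
  have hK0 : K ≠ 0 := by
    rw [hKalg]
    exact ne_zero_add_mul_I _ _ hu0
  set N0 : ℂ := (27/64)*(p:ℂ)*(q:ℂ)^2 + (-27/64)*(p:ℂ)*(q:ℂ)^2*(x:ℂ) + (-27/64)*(p:ℂ)*(q:ℂ)^2*(t:ℂ)*Complex.I + (27/64)*(p:ℂ)*(q:ℂ)^2*(t:ℂ)*Complex.I*(x:ℂ) + (-27/64)*(p:ℂ)*(q:ℂ)^2*(t:ℂ)^2*Complex.I^2 + (27/64)*(p:ℂ)*(q:ℂ)^2*(t:ℂ)^2*Complex.I^2*(x:ℂ) + (27/64)*(p:ℂ)*(q:ℂ)^2*(t:ℂ)^3*Complex.I^3 + (-27/64)*(p:ℂ)*(q:ℂ)^2*(t:ℂ)^3*Complex.I^3*(x:ℂ) + (-27/128)*(p:ℂ)*(q:ℂ)^2*(σ:ℂ)*(x:ℂ) + (27/128)*(p:ℂ)*(q:ℂ)^2*(σ:ℂ)*(t:ℂ)*Complex.I*(x:ℂ) + (27/128)*(p:ℂ)*(q:ℂ)^2*(σ:ℂ)*(t:ℂ)^2*Complex.I^2*(x:ℂ)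 + (-27/128)*(p:ℂ)*(q:ℂ)^2*(σ:ℂ)*(t:ℂ)^3*Complex.I^3*(x:ℂ) + (-27/64)*(p:ℂ)*(q:ℂ)^2*(σ:ℂ)^2 + (81/128)*(p:ℂ)*(q:ℂ)^2*(σ:ℂ)^2*(x:ℂ) + (27/64)*(p:ℂ)*(q:ℂ)^2*(σ:ℂ)^2*(t:ℂ)*Complex.I + (-81/128)*(p:ℂ)*(q:ℂ)^2*(σ:ℂ)^2*(t:ℂ)*Complex.I*(x:ℂ) + (27/64)*(p:ℂ)*(q:ℂ)^2*(σ:ℂ)^2*(t:ℂ)^2*Complex.I^2 + (-81/128)*(p:ℂ)*(q:ℂ)^2*(σ:ℂ)^2*(t:ℂ)^2*Complex.I^2*(x:ℂ) + (-27/64)*(p:ℂ)*(q:ℂ)^2*(σ:ℂ)^2*(t:ℂ)^3*Complex.I^3 + (81/128)*(p:ℂ)*(q:ℂ)^2*(σ:ℂ)^2*(t:ℂ)^3*Complex.I^3*(x:ℂ) + (-27/32)*(p:ℂ)^2*(q:ℂ) + (27/32)*(p:ℂ)^2*(q:ℂ)*(x:ℂ) + (27/16)*(p:ℂ)^2*(q:ℂ)*(t:ℂ)*Complex.I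 + (-27/16)*(p:ℂ)^2*(q:ℂ)*(t:ℂ)*Complex.I*(x:ℂ) + (-27/32)*(p:ℂ)^2*(q:ℂ)*(t:ℂ)^2*Complex.I^2 + (27/32)*(p:ℂ)^2*(q:ℂ)*(t:ℂ)^2*Complex.I^2*(x:ℂ) + (-27/64)*(p:ℂ)^2*(q:ℂ)*(σ:ℂ)*(x:ℂ) + (27/32)*(p:ℂ)^2*(q:ℂ)*(σ:ℂ)*(t:ℂ)*Complex.I*(x:ℂ) + (-27/64)*(p:ℂ)^2*(q:ℂ)*(σ:ℂ)*(t:ℂ)^2*Complex.I^2*(x:ℂ) + (27/32)*(p:ℂ)^2*(q:ℂ)*(σ:ℂ)^2 + (-81/64)*(p:ℂ)^2*(q:ℂ)*(σ:ℂ)^2*(x:ℂ) + (-27/16)*(p:ℂ)^2*(q:ℂ)*(σ:ℂ)^2*(t:ℂ)*Complex.I + (81/32)*(p:ℂ)^2*(q:ℂ)*(σ:ℂ)^2*(t:ℂ)*Complex.I*(x:ℂ) + (27/32)*(p:ℂ)^2*(q:ℂ)*(σ:ℂ)^2*(t:ℂ)^2*Complex.I^2 + (-81/64)*(p:ℂ)^2*(q:ℂ)*(σ:ℂ)^2*(t:ℂ)^2*Complex.I^2*(x:ℂ)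 with hN0def
  have hG0N : (27/4 * (3 * ((-1 + (t:ℂ)*Complex.I)/2) / 2) *
      ((1/3 * ((p:ℂ)*(q:ℂ)/(x:ℂ))) * (((-1 + (t:ℂ)*Complex.I)/2) * (((1 + (t:ℂ)*Complex.I)/2) * (q:ℂ))
          + ((1 - (t:ℂ)*Complex.I)/2) * (p:ℂ))
        + ((p:ℂ)*(q:ℂ)) * (((-1 + (t:ℂ)*Complex.I)/2) *
              (1/3 * ((((-1 - (t:ℂ)*Complex.I)/2)) * ((q:ℂ)/(1+(σ:ℂ)))) * (1/2 * ((σ:ℂ)/(1-(x:ℂ)))))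
            + 1/3 * ((((-1 + (t:ℂ)*Complex.I)/2)) * ((p:ℂ)/(1-(σ:ℂ)))) * (-(1/2 * ((σ:ℂ)/(1-(x:ℂ))))))) : ℂ) * ((x:ℂ) * (1+(σ:ℂ)) * (1-(x:ℂ)) * (1-(σ:ℂ))) = N0 := by
    rw [hN0def]
    have hd1 : (p:ℂ)*(q:ℂ)/(x:ℂ)*(x:ℂ) = (p:ℂ)*(q:ℂ) := div_mul_cancel₀ _ hXC
    have hd2 : (q:ℂ)/(1+(σ:ℂ))*(1+(σ:ℂ)) = (q:ℂ) := div_mul_cancel₀ _ h1pS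
    have hd3 : (σ:ℂ)/(1-(x:ℂ))*(1-(x:ℂ)) = (σ:ℂ) := div_mul_cancel₀ _ h1mX
    have hd4 : (p:ℂ)/(1-(σ:ℂ))*(1-(σ:ℂ)) = (p:ℂ) := div_mul_cancel₀ _ h1mS
    linear_combination ((27/64)*(q:ℂ) + (-27/64)*(q:ℂ)*(x:ℂ) + (-27/64)*(q:ℂ)*(t:ℂ)*Complex.I + (27/64)*(q:ℂ)*(t:ℂ)*Complex.I*(x:ℂ) + (-27/64)*(q:ℂ)*(t:ℂ)^2*Complex.I^2 + (27/64)*(q:ℂ)*(t:ℂ)^2*Complex.I^2*(x:ℂ) + (27/64)*(q:ℂ)*(t:ℂ)^3*Complex.I^3 + (-27/64)*(q:ℂ)*(t:ℂ)^3*Complex.I^3*(x:ℂ) + (-27/64)*(q:ℂ)*(σ:ℂ)^2 + (27/64)*(q:ℂ)*(σ:ℂ)^2*(x:ℂ) + (27/64)*(q:ℂ)*(σ:ℂ)^2*(t:ℂ)*Complex.I + (-27/64)*(q:ℂ)*(σ:ℂ)^2*(t:ℂ)*Complex.I*(x:ℂ) + (27/64)*(q:ℂ)*(σ:ℂ)^2*(t:ℂ)^2*Complex.I^2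 + (-27/64)*(q:ℂ)*(σ:ℂ)^2*(t:ℂ)^2*Complex.I^2*(x:ℂ) + (-27/64)*(q:ℂ)*(σ:ℂ)^2*(t:ℂ)^3*Complex.I^3 + (27/64)*(q:ℂ)*(σ:ℂ)^2*(t:ℂ)^3*Complex.I^3*(x:ℂ) + (-27/32)*(p:ℂ) + (27/32)*(p:ℂ)*(x:ℂ) + (27/16)*(p:ℂ)*(t:ℂ)*Complex.I + (-27/16)*(p:ℂ)*(t:ℂ)*Complex.I*(x:ℂ) + (-27/32)*(p:ℂ)*(t:ℂ)^2*Complex.I^2 + (27/32)*(p:ℂ)*(t:ℂ)^2*Complex.I^2*(x:ℂ) + (27/32)*(p:ℂ)*(σ:ℂ)^2 + (-27/32)*(p:ℂ)*(σ:ℂ)^2*(x:ℂ) + (-27/16)*(p:ℂ)*(σ:ℂ)^2*(t:ℂ)*Complex.I + (27/16)*(p:ℂ)*(σ:ℂ)^2*(t:ℂ)*Complex.I*(x:ℂ) + (27/32)*(p:ℂ)*(σ:ℂ)^2*(t:ℂ)^2*Complex.I^2 + (-27/32)*(p:ℂ)*(σ:ℂ)^2*(t:ℂ)^2*Complex.I^2*(x:ℂ))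 * hd1 + ((-27/128)*(p:ℂ)*(q:ℂ)*(x:ℂ)*((σ:ℂ)/(1-(x:ℂ))) + (27/128)*(p:ℂ)*(q:ℂ)*(x:ℂ)^2*((σ:ℂ)/(1-(x:ℂ))) + (27/128)*(p:ℂ)*(q:ℂ)*(t:ℂ)*Complex.I*(x:ℂ)*((σ:ℂ)/(1-(x:ℂ))) + (-27/128)*(p:ℂ)*(q:ℂ)*(t:ℂ)*Complex.I*(x:ℂ)^2*((σ:ℂ)/(1-(x:ℂ))) + (27/128)*(p:ℂ)*(q:ℂ)*(t:ℂ)^2*Complex.I^2*(x:ℂ)*((σ:ℂ)/(1-(x:ℂ))) + (-27/128)*(p:ℂ)*(q:ℂ)*(t:ℂ)^2*Complex.I^2*(x:ℂ)^2*((σ:ℂ)/(1-(x:ℂ))) + (-27/128)*(p:ℂ)*(q:ℂ)*(t:ℂ)^3*Complex.I^3*(x:ℂ)*((σ:ℂ)/(1-(x:ℂ))) + (27/128)*(p:ℂ)*(q:ℂ)*(t:ℂ)^3*Complex.I^3*(x:ℂ)^2*((σ:ℂ)/(1-(x:ℂ))) + (27/128)*(p:ℂ)*(q:ℂ)*(σ:ℂ)*(x:ℂ)*((σ:ℂ)/(1-(x:ℂ)))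 + (-27/128)*(p:ℂ)*(q:ℂ)*(σ:ℂ)*(x:ℂ)^2*((σ:ℂ)/(1-(x:ℂ))) + (-27/128)*(p:ℂ)*(q:ℂ)*(σ:ℂ)*(t:ℂ)*Complex.I*(x:ℂ)*((σ:ℂ)/(1-(x:ℂ))) + (27/128)*(p:ℂ)*(q:ℂ)*(σ:ℂ)*(t:ℂ)*Complex.I*(x:ℂ)^2*((σ:ℂ)/(1-(x:ℂ))) + (-27/128)*(p:ℂ)*(q:ℂ)*(σ:ℂ)*(t:ℂ)^2*Complex.I^2*(x:ℂ)*((σ:ℂ)/(1-(x:ℂ))) + (27/128)*(p:ℂ)*(q:ℂ)*(σ:ℂ)*(t:ℂ)^2*Complex.I^2*(x:ℂ)^2*((σ:ℂ)/(1-(x:ℂ))) + (27/128)*(p:ℂ)*(q:ℂ)*(σ:ℂ)*(t:ℂ)^3*Complex.I^3*(x:ℂ)*((σ:ℂ)/(1-(x:ℂ))) + (-27/128)*(p:ℂ)*(q:ℂ)*(σ:ℂ)*(t:ℂ)^3*Complex.I^3*(x:ℂ)^2*((σ:ℂ)/(1-(x:ℂ)))) * hd2 + ((-27/64)*(p:ℂ)*(q:ℂ)*(x:ℂ)*((p:ℂ)/(1-(σ:ℂ)))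 + (27/32)*(p:ℂ)*(q:ℂ)*(t:ℂ)*Complex.I*(x:ℂ)*((p:ℂ)/(1-(σ:ℂ))) + (-27/64)*(p:ℂ)*(q:ℂ)*(t:ℂ)^2*Complex.I^2*(x:ℂ)*((p:ℂ)/(1-(σ:ℂ))) + (27/64)*(p:ℂ)*(q:ℂ)*(σ:ℂ)^2*(x:ℂ)*((p:ℂ)/(1-(σ:ℂ))) + (-27/32)*(p:ℂ)*(q:ℂ)*(σ:ℂ)^2*(t:ℂ)*Complex.I*(x:ℂ)*((p:ℂ)/(1-(σ:ℂ))) + (27/64)*(p:ℂ)*(q:ℂ)*(σ:ℂ)^2*(t:ℂ)^2*Complex.I^2*(x:ℂ)*((p:ℂ)/(1-(σ:ℂ))) + (-27/128)*(p:ℂ)*(q:ℂ)^2*(x:ℂ) + (27/128)*(p:ℂ)*(q:ℂ)^2*(t:ℂ)*Complex.I*(x:ℂ) + (27/128)*(p:ℂ)*(q:ℂ)^2*(t:ℂ)^2*Complex.I^2*(x:ℂ) + (-27/128)*(p:ℂ)*(q:ℂ)^2*(t:ℂ)^3*Complex.I^3*(x:ℂ) + (27/128)*(p:ℂ)*(q:ℂ)^2*(σ:ℂ)*(x:ℂ)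 + (-27/128)*(p:ℂ)*(q:ℂ)^2*(σ:ℂ)*(t:ℂ)*Complex.I*(x:ℂ) + (-27/128)*(p:ℂ)*(q:ℂ)^2*(σ:ℂ)*(t:ℂ)^2*Complex.I^2*(x:ℂ) + (27/128)*(p:ℂ)*(q:ℂ)^2*(σ:ℂ)*(t:ℂ)^3*Complex.I^3*(x:ℂ)) * hd3 + ((-27/64)*(p:ℂ)*(q:ℂ)*(σ:ℂ)*(x:ℂ) + (27/32)*(p:ℂ)*(q:ℂ)*(σ:ℂ)*(t:ℂ)*Complex.I*(x:ℂ) + (-27/64)*(p:ℂ)*(q:ℂ)*(σ:ℂ)*(t:ℂ)^2*Complex.I^2*(x:ℂ) + (-27/64)*(p:ℂ)*(q:ℂ)*(σ:ℂ)^2*(x:ℂ) + (27/32)*(p:ℂ)*(q:ℂ)*(σ:ℂ)^2*(t:ℂ)*Complex.I*(x:ℂ) + (-27/64)*(p:ℂ)*(q:ℂ)*(σ:ℂ)^2*(t:ℂ)^2*Complex.I^2*(x:ℂ)) * hd4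
  have h1' : N0 * K = (27/4 * (3 * ((-1 + (t:ℂ)*Complex.I)/2) / 2 * ((p:ℂ)*(q:ℂ)) *
      (((-1 + (t:ℂ)*Complex.I)/2) * (((1 + (t:ℂ)*Complex.I)/2) * (q:ℂ))
        + ((1 - (t:ℂ)*Complex.I)/2) * (p:ℂ)) - 1) : ℂ) * ((x:ℂ) * (1+(σ:ℂ)) * (1-(x:ℂ)) * (1-(σ:ℂ))) := by
    rw [hN0def, hKdef]
    linear_combination ((81/64)*(p:ℂ)*(q:ℂ)^2*(t:ℂ)^2*(x:ℂ) + (-81/64)*(p:ℂ)*(q:ℂ)^2*(t:ℂ)^2*(x:ℂ)^2 + (-81/64)*(p:ℂ)*(q:ℂ)^2*(t:ℂ)^3*Complex.I*(x:ℂ) + (81/64)*(p:ℂ)*(q:ℂ)^2*(t:ℂ)^3*Complex.I*(x:ℂ)^2 + (-81/64)*(p:ℂ)*(q:ℂ)^2*(σ:ℂ)^2*(t:ℂ)^2*(x:ℂ) + (81/64)*(p:ℂ)*(q:ℂ)^2*(σ:ℂ)^2*(t:ℂ)^2*(x:ℂ)^2 + (81/64)*(p:ℂ)*(q:ℂ)^2*(σ:ℂ)^2*(t:ℂ)^3*Complex.I*(x:ℂ)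 + (-81/64)*(p:ℂ)*(q:ℂ)^2*(σ:ℂ)^2*(t:ℂ)^3*Complex.I*(x:ℂ)^2 + (81/32)*(p:ℂ)^2*(q:ℂ)*(t:ℂ)^2*(x:ℂ) + (-81/32)*(p:ℂ)^2*(q:ℂ)*(t:ℂ)^2*(x:ℂ)^2 + (-81/32)*(p:ℂ)^2*(q:ℂ)*(σ:ℂ)^2*(t:ℂ)^2*(x:ℂ) + (81/32)*(p:ℂ)^2*(q:ℂ)*(σ:ℂ)^2*(t:ℂ)^2*(x:ℂ)^2 + (27/64)*(p:ℂ)^3*(q:ℂ)^6*(t:ℂ)^2 + (-27/64)*(p:ℂ)^3*(q:ℂ)^6*(t:ℂ)^2*(x:ℂ) + (27/128)*(p:ℂ)^3*(q:ℂ)^6*(t:ℂ)^4 + (-27/128)*(p:ℂ)^3*(q:ℂ)^6*(t:ℂ)^4*(x:ℂ) + (-27/128)*(p:ℂ)^3*(q:ℂ)^6*(t:ℂ)^4*Complex.I^2 + (27/128)*(p:ℂ)^3*(q:ℂ)^6*(t:ℂ)^4*Complex.I^2*(x:ℂ) + (-27/128)*(p:ℂ)^3*(q:ℂ)^6*(σ:ℂ)*(t:ℂ)^2*(x:ℂ)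 + (-27/256)*(p:ℂ)^3*(q:ℂ)^6*(σ:ℂ)*(t:ℂ)^4*(x:ℂ) + (27/256)*(p:ℂ)^3*(q:ℂ)^6*(σ:ℂ)*(t:ℂ)^4*Complex.I^2*(x:ℂ) + (-27/64)*(p:ℂ)^3*(q:ℂ)^6*(σ:ℂ)^2*(t:ℂ)^2 + (81/128)*(p:ℂ)^3*(q:ℂ)^6*(σ:ℂ)^2*(t:ℂ)^2*(x:ℂ) + (-27/128)*(p:ℂ)^3*(q:ℂ)^6*(σ:ℂ)^2*(t:ℂ)^4 + (81/256)*(p:ℂ)^3*(q:ℂ)^6*(σ:ℂ)^2*(t:ℂ)^4*(x:ℂ) + (27/128)*(p:ℂ)^3*(q:ℂ)^6*(σ:ℂ)^2*(t:ℂ)^4*Complex.I^2 + (-81/256)*(p:ℂ)^3*(q:ℂ)^6*(σ:ℂ)^2*(t:ℂ)^4*Complex.I^2*(x:ℂ) + (-27/32)*(p:ℂ)^4*(q:ℂ)^5*(t:ℂ)^2 + (27/32)*(p:ℂ)^4*(q:ℂ)^5*(t:ℂ)^2*(x:ℂ) + (27/32)*(p:ℂ)^4*(q:ℂ)^5*(t:ℂ)^3*Complex.I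 + (-27/32)*(p:ℂ)^4*(q:ℂ)^5*(t:ℂ)^3*Complex.I*(x:ℂ) + (27/32)*(p:ℂ)^4*(q:ℂ)^5*(σ:ℂ)^2*(t:ℂ)^2 + (-81/64)*(p:ℂ)^4*(q:ℂ)^5*(σ:ℂ)^2*(t:ℂ)^2*(x:ℂ) + (-27/32)*(p:ℂ)^4*(q:ℂ)^5*(σ:ℂ)^2*(t:ℂ)^3*Complex.I + (81/64)*(p:ℂ)^4*(q:ℂ)^5*(σ:ℂ)^2*(t:ℂ)^3*Complex.I*(x:ℂ) + (-27/32)*(p:ℂ)^5*(q:ℂ)^4*(t:ℂ)^2 + (27/32)*(p:ℂ)^5*(q:ℂ)^4*(t:ℂ)^2*(x:ℂ) + (-27/64)*(p:ℂ)^5*(q:ℂ)^4*(t:ℂ)^3*Complex.I + (27/64)*(p:ℂ)^5*(q:ℂ)^4*(t:ℂ)^3*Complex.I*(x:ℂ) + (-27/128)*(p:ℂ)^5*(q:ℂ)^4*(t:ℂ)^4 + (27/128)*(p:ℂ)^5*(q:ℂ)^4*(t:ℂ)^4*(x:ℂ) + (27/128)*(p:ℂ)^5*(q:ℂ)^4*(t:ℂ)^4*Complex.I^2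 + (-27/128)*(p:ℂ)^5*(q:ℂ)^4*(t:ℂ)^4*Complex.I^2*(x:ℂ) + (-27/64)*(p:ℂ)^5*(q:ℂ)^4*(σ:ℂ)*(t:ℂ)^2*(x:ℂ) + (27/128)*(p:ℂ)^5*(q:ℂ)^4*(σ:ℂ)*(t:ℂ)^3*Complex.I*(x:ℂ) + (27/256)*(p:ℂ)^5*(q:ℂ)^4*(σ:ℂ)*(t:ℂ)^4*(x:ℂ) + (-27/256)*(p:ℂ)^5*(q:ℂ)^4*(σ:ℂ)*(t:ℂ)^4*Complex.I^2*(x:ℂ) + (27/32)*(p:ℂ)^5*(q:ℂ)^4*(σ:ℂ)^2*(t:ℂ)^2 + (-81/64)*(p:ℂ)^5*(q:ℂ)^4*(σ:ℂ)^2*(t:ℂ)^2*(x:ℂ) + (27/64)*(p:ℂ)^5*(q:ℂ)^4*(σ:ℂ)^2*(t:ℂ)^3*Complex.I + (-81/128)*(p:ℂ)^5*(q:ℂ)^4*(σ:ℂ)^2*(t:ℂ)^3*Complex.I*(x:ℂ) + (27/128)*(p:ℂ)^5*(q:ℂ)^4*(σ:ℂ)^2*(t:ℂ)^4 + (-81/256)*(p:ℂ)^5*(q:ℂ)^4*(σ:ℂ)^2*(t:ℂ)^4*(x:ℂ)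 + (-27/128)*(p:ℂ)^5*(q:ℂ)^4*(σ:ℂ)^2*(t:ℂ)^4*Complex.I^2 + (81/256)*(p:ℂ)^5*(q:ℂ)^4*(σ:ℂ)^2*(t:ℂ)^4*Complex.I^2*(x:ℂ) + (81/64)*(p:ℂ)^6*(q:ℂ)^3*(t:ℂ)^2 + (-81/64)*(p:ℂ)^6*(q:ℂ)^3*(t:ℂ)^2*(x:ℂ) + (-27/64)*(p:ℂ)^6*(q:ℂ)^3*(t:ℂ)^3*Complex.I + (27/64)*(p:ℂ)^6*(q:ℂ)^3*(t:ℂ)^3*Complex.I*(x:ℂ) + (81/128)*(p:ℂ)^6*(q:ℂ)^3*(σ:ℂ)*(t:ℂ)^2*(x:ℂ) + (-27/128)*(p:ℂ)^6*(q:ℂ)^3*(σ:ℂ)*(t:ℂ)^3*Complex.I*(x:ℂ) + (-81/64)*(p:ℂ)^6*(q:ℂ)^3*(σ:ℂ)^2*(t:ℂ)^2 + (243/128)*(p:ℂ)^6*(q:ℂ)^3*(σ:ℂ)^2*(t:ℂ)^2*(x:ℂ) + (27/64)*(p:ℂ)^6*(q:ℂ)^3*(σ:ℂ)^2*(t:ℂ)^3*Complex.I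 + (-81/128)*(p:ℂ)^6*(q:ℂ)^3*(σ:ℂ)^2*(t:ℂ)^3*Complex.I*(x:ℂ)) * Complex.I_sq + ((-81/64)*(p:ℂ)*(q:ℂ)^2*(x:ℂ) + (81/64)*(p:ℂ)*(q:ℂ)^2*(x:ℂ)^2 + (81/64)*(p:ℂ)*(q:ℂ)^2*(t:ℂ)*Complex.I*(x:ℂ) + (-81/64)*(p:ℂ)*(q:ℂ)^2*(t:ℂ)*Complex.I*(x:ℂ)^2 + (81/64)*(p:ℂ)*(q:ℂ)^2*(σ:ℂ)^2*(x:ℂ) + (-81/64)*(p:ℂ)*(q:ℂ)^2*(σ:ℂ)^2*(x:ℂ)^2 + (-81/64)*(p:ℂ)*(q:ℂ)^2*(σ:ℂ)^2*(t:ℂ)*Complex.I*(x:ℂ) + (81/64)*(p:ℂ)*(q:ℂ)^2*(σ:ℂ)^2*(t:ℂ)*Complex.I*(x:ℂ)^2 + (-81/32)*(p:ℂ)^2*(q:ℂ)*(x:ℂ) + (81/32)*(p:ℂ)^2*(q:ℂ)*(x:ℂ)^2 + (81/32)*(p:ℂ)^2*(q:ℂ)*(σ:ℂ)^2*(x:ℂ)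 + (-81/32)*(p:ℂ)^2*(q:ℂ)*(σ:ℂ)^2*(x:ℂ)^2 + (-135/128)*(p:ℂ)^3*(q:ℂ)^6 + (135/128)*(p:ℂ)^3*(q:ℂ)^6*(x:ℂ) + (-27/128)*(p:ℂ)^3*(q:ℂ)^6*(t:ℂ)^2 + (27/128)*(p:ℂ)^3*(q:ℂ)^6*(t:ℂ)^2*(x:ℂ) + (135/256)*(p:ℂ)^3*(q:ℂ)^6*(σ:ℂ)*(x:ℂ) + (27/256)*(p:ℂ)^3*(q:ℂ)^6*(σ:ℂ)*(t:ℂ)^2*(x:ℂ) + (135/128)*(p:ℂ)^3*(q:ℂ)^6*(σ:ℂ)^2 + (-405/256)*(p:ℂ)^3*(q:ℂ)^6*(σ:ℂ)^2*(x:ℂ) + (27/128)*(p:ℂ)^3*(q:ℂ)^6*(σ:ℂ)^2*(t:ℂ)^2 + (-81/256)*(p:ℂ)^3*(q:ℂ)^6*(σ:ℂ)^2*(t:ℂ)^2*(x:ℂ) + (27/32)*(p:ℂ)^4*(q:ℂ)^5 + (-27/32)*(p:ℂ)^4*(q:ℂ)^5*(x:ℂ) + (-27/32)*(p:ℂ)^4*(q:ℂ)^5*(t:ℂ)*Complex.I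 + (27/32)*(p:ℂ)^4*(q:ℂ)^5*(t:ℂ)*Complex.I*(x:ℂ) + (-27/32)*(p:ℂ)^4*(q:ℂ)^5*(σ:ℂ)^2 + (81/64)*(p:ℂ)^4*(q:ℂ)^5*(σ:ℂ)^2*(x:ℂ) + (27/32)*(p:ℂ)^4*(q:ℂ)^5*(σ:ℂ)^2*(t:ℂ)*Complex.I + (-81/64)*(p:ℂ)^4*(q:ℂ)^5*(σ:ℂ)^2*(t:ℂ)*Complex.I*(x:ℂ) + (189/128)*(p:ℂ)^5*(q:ℂ)^4 + (-189/128)*(p:ℂ)^5*(q:ℂ)^4*(x:ℂ) + (27/64)*(p:ℂ)^5*(q:ℂ)^4*(t:ℂ)*Complex.I + (-27/64)*(p:ℂ)^5*(q:ℂ)^4*(t:ℂ)*Complex.I*(x:ℂ) + (27/128)*(p:ℂ)^5*(q:ℂ)^4*(t:ℂ)^2 + (-27/128)*(p:ℂ)^5*(q:ℂ)^4*(t:ℂ)^2*(x:ℂ) + (27/256)*(p:ℂ)^5*(q:ℂ)^4*(σ:ℂ)*(x:ℂ) + (-27/128)*(p:ℂ)^5*(q:ℂ)^4*(σ:ℂ)*(t:ℂ)*Complex.I*(x:ℂ)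 + (-27/256)*(p:ℂ)^5*(q:ℂ)^4*(σ:ℂ)*(t:ℂ)^2*(x:ℂ) + (-189/128)*(p:ℂ)^5*(q:ℂ)^4*(σ:ℂ)^2 + (567/256)*(p:ℂ)^5*(q:ℂ)^4*(σ:ℂ)^2*(x:ℂ) + (-27/64)*(p:ℂ)^5*(q:ℂ)^4*(σ:ℂ)^2*(t:ℂ)*Complex.I + (81/128)*(p:ℂ)^5*(q:ℂ)^4*(σ:ℂ)^2*(t:ℂ)*Complex.I*(x:ℂ) + (-27/128)*(p:ℂ)^5*(q:ℂ)^4*(σ:ℂ)^2*(t:ℂ)^2 + (81/256)*(p:ℂ)^5*(q:ℂ)^4*(σ:ℂ)^2*(t:ℂ)^2*(x:ℂ) + (-81/64)*(p:ℂ)^6*(q:ℂ)^3 + (81/64)*(p:ℂ)^6*(q:ℂ)^3*(x:ℂ) + (27/64)*(p:ℂ)^6*(q:ℂ)^3*(t:ℂ)*Complex.I + (-27/64)*(p:ℂ)^6*(q:ℂ)^3*(t:ℂ)*Complex.I*(x:ℂ) + (-81/128)*(p:ℂ)^6*(q:ℂ)^3*(σ:ℂ)*(x:ℂ) + (27/128)*(p:ℂ)^6*(q:ℂ)^3*(σ:ℂ)*(t:ℂ)*Complex.I*(x:ℂ)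 + (81/64)*(p:ℂ)^6*(q:ℂ)^3*(σ:ℂ)^2 + (-243/128)*(p:ℂ)^6*(q:ℂ)^3*(σ:ℂ)^2*(x:ℂ) + (-27/64)*(p:ℂ)^6*(q:ℂ)^3*(σ:ℂ)^2*(t:ℂ)*Complex.I + (81/128)*(p:ℂ)^6*(q:ℂ)^3*(σ:ℂ)^2*(t:ℂ)*Complex.I*(x:ℂ)) * htC + ((-27/8)*(q:ℂ)^3 + (27/8)*(q:ℂ)^3*(x:ℂ) + (27/8)*(q:ℂ)^3*(σ:ℂ) + (-81/16)*(q:ℂ)^3*(σ:ℂ)*(x:ℂ) + (27/8)*(q:ℂ)^3*(σ:ℂ)^2 + (-27/8)*(q:ℂ)^3*(σ:ℂ)^2*(x:ℂ) + (-27/8)*(q:ℂ)^3*(σ:ℂ)^3 + (81/16)*(q:ℂ)^3*(σ:ℂ)^3*(x:ℂ) + (-27/8)*(q:ℂ)^6 + (27/8)*(q:ℂ)^6*(x:ℂ) + (27/16)*(q:ℂ)^6*(σ:ℂ)*(x:ℂ) + (27/8)*(q:ℂ)^6*(σ:ℂ)^2 + (-81/16)*(q:ℂ)^6*(σ:ℂ)^2*(x:ℂ)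 + (27/8)*(p:ℂ)*(q:ℂ)^5 + (-27/8)*(p:ℂ)*(q:ℂ)^5*(x:ℂ) + (-27/8)*(p:ℂ)*(q:ℂ)^5*(t:ℂ)*Complex.I + (27/8)*(p:ℂ)*(q:ℂ)^5*(t:ℂ)*Complex.I*(x:ℂ) + (-27/8)*(p:ℂ)*(q:ℂ)^5*(σ:ℂ)^2 + (81/16)*(p:ℂ)*(q:ℂ)^5*(σ:ℂ)^2*(x:ℂ) + (27/8)*(p:ℂ)*(q:ℂ)^5*(σ:ℂ)^2*(t:ℂ)*Complex.I + (-81/16)*(p:ℂ)*(q:ℂ)^5*(σ:ℂ)^2*(t:ℂ)*Complex.I*(x:ℂ) + (27/8)*(p:ℂ)^2*(q:ℂ)^4 + (-27/8)*(p:ℂ)^2*(q:ℂ)^4*(x:ℂ) + (27/8)*(p:ℂ)^2*(q:ℂ)^4*(t:ℂ)*Complex.I + (-27/8)*(p:ℂ)^2*(q:ℂ)^4*(t:ℂ)*Complex.I*(x:ℂ) + (-27/8)*(p:ℂ)^2*(q:ℂ)^4*(σ:ℂ)^2 + (81/16)*(p:ℂ)^2*(q:ℂ)^4*(σ:ℂ)^2*(x:ℂ)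 + (-27/8)*(p:ℂ)^2*(q:ℂ)^4*(σ:ℂ)^2*(t:ℂ)*Complex.I + (81/16)*(p:ℂ)^2*(q:ℂ)^4*(σ:ℂ)^2*(t:ℂ)*Complex.I*(x:ℂ) + (-27/8)*(p:ℂ)^3*(q:ℂ)^3 + (27/8)*(p:ℂ)^3*(q:ℂ)^3*(x:ℂ) + (-27/16)*(p:ℂ)^3*(q:ℂ)^3*(σ:ℂ)*(x:ℂ) + (27/8)*(p:ℂ)^3*(q:ℂ)^3*(σ:ℂ)^2 + (-81/16)*(p:ℂ)^3*(q:ℂ)^3*(σ:ℂ)^2*(x:ℂ)) * hp3C + ((-27/4) + (27/4)*(x:ℂ) + (27/4)*(σ:ℂ) + (-27/4)*(σ:ℂ)*(x:ℂ) + (27/4)*(σ:ℂ)^2 + (-27/4)*(σ:ℂ)^2*(x:ℂ) + (-27/4)*(σ:ℂ)^3 + (27/4)*(σ:ℂ)^3*(x:ℂ) + (-27/8)*(q:ℂ)^3 + (27/8)*(q:ℂ)^3*(x:ℂ) + (27/8)*(q:ℂ)^3*(σ:ℂ) + (-27/16)*(q:ℂ)^3*(σ:ℂ)*(x:ℂ)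 + (27/8)*(q:ℂ)^3*(σ:ℂ)^2 + (-27/4)*(q:ℂ)^3*(σ:ℂ)^2*(x:ℂ) + (-27/8)*(q:ℂ)^3*(σ:ℂ)^3 + (81/16)*(q:ℂ)^3*(σ:ℂ)^3*(x:ℂ) + (27/8)*(p:ℂ)*(q:ℂ)^2 + (-27/8)*(p:ℂ)*(q:ℂ)^2*(x:ℂ) + (-27/8)*(p:ℂ)*(q:ℂ)^2*(t:ℂ)*Complex.I + (27/8)*(p:ℂ)*(q:ℂ)^2*(t:ℂ)*Complex.I*(x:ℂ) + (-27/8)*(p:ℂ)*(q:ℂ)^2*(σ:ℂ) + (27/8)*(p:ℂ)*(q:ℂ)^2*(σ:ℂ)*(x:ℂ) + (27/8)*(p:ℂ)*(q:ℂ)^2*(σ:ℂ)*(t:ℂ)*Complex.I + (-27/8)*(p:ℂ)*(q:ℂ)^2*(σ:ℂ)*(t:ℂ)*Complex.I*(x:ℂ) + (-27/8)*(p:ℂ)*(q:ℂ)^2*(σ:ℂ)^2 + (81/16)*(p:ℂ)*(q:ℂ)^2*(σ:ℂ)^2*(x:ℂ) + (27/8)*(p:ℂ)*(q:ℂ)^2*(σ:ℂ)^2*(t:ℂ)*Complex.I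 + (-81/16)*(p:ℂ)*(q:ℂ)^2*(σ:ℂ)^2*(t:ℂ)*Complex.I*(x:ℂ) + (27/8)*(p:ℂ)*(q:ℂ)^2*(σ:ℂ)^3 + (-81/16)*(p:ℂ)*(q:ℂ)^2*(σ:ℂ)^3*(x:ℂ) + (-27/8)*(p:ℂ)*(q:ℂ)^2*(σ:ℂ)^3*(t:ℂ)*Complex.I + (81/16)*(p:ℂ)*(q:ℂ)^2*(σ:ℂ)^3*(t:ℂ)*Complex.I*(x:ℂ) + (27/8)*(p:ℂ)^2*(q:ℂ) + (-27/8)*(p:ℂ)^2*(q:ℂ)*(x:ℂ) + (27/8)*(p:ℂ)^2*(q:ℂ)*(t:ℂ)*Complex.I + (-27/8)*(p:ℂ)^2*(q:ℂ)*(t:ℂ)*Complex.I*(x:ℂ) + (-27/8)*(p:ℂ)^2*(q:ℂ)*(σ:ℂ) + (27/8)*(p:ℂ)^2*(q:ℂ)*(σ:ℂ)*(x:ℂ) + (-27/8)*(p:ℂ)^2*(q:ℂ)*(σ:ℂ)*(t:ℂ)*Complex.I + (27/8)*(p:ℂ)^2*(q:ℂ)*(σ:ℂ)*(t:ℂ)*Complex.I*(x:ℂ)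 + (-27/8)*(p:ℂ)^2*(q:ℂ)*(σ:ℂ)^2 + (81/16)*(p:ℂ)^2*(q:ℂ)*(σ:ℂ)^2*(x:ℂ) + (-27/8)*(p:ℂ)^2*(q:ℂ)*(σ:ℂ)^2*(t:ℂ)*Complex.I + (81/16)*(p:ℂ)^2*(q:ℂ)*(σ:ℂ)^2*(t:ℂ)*Complex.I*(x:ℂ) + (27/8)*(p:ℂ)^2*(q:ℂ)*(σ:ℂ)^3 + (-81/16)*(p:ℂ)^2*(q:ℂ)*(σ:ℂ)^3*(x:ℂ) + (27/8)*(p:ℂ)^2*(q:ℂ)*(σ:ℂ)^3*(t:ℂ)*Complex.I + (-81/16)*(p:ℂ)^2*(q:ℂ)*(σ:ℂ)^3*(t:ℂ)*Complex.I*(x:ℂ)) * hq3C + ((27/4) + (-27/4)*(x:ℂ) + (-27/4)*(σ:ℂ)^2 + (27/4)*(σ:ℂ)^2*(x:ℂ) + (-27/8)*(p:ℂ)*(q:ℂ)^2 + (81/16)*(p:ℂ)*(q:ℂ)^2*(x:ℂ) + (27/8)*(p:ℂ)*(q:ℂ)^2*(t:ℂ)*Complex.I + (-81/16)*(p:ℂ)*(q:ℂ)^2*(t:ℂ)*Complex.I*(x:ℂ)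 + (27/8)*(p:ℂ)*(q:ℂ)^2*(σ:ℂ)^2 + (-81/16)*(p:ℂ)*(q:ℂ)^2*(σ:ℂ)^2*(x:ℂ) + (-27/8)*(p:ℂ)*(q:ℂ)^2*(σ:ℂ)^2*(t:ℂ)*Complex.I + (81/16)*(p:ℂ)*(q:ℂ)^2*(σ:ℂ)^2*(t:ℂ)*Complex.I*(x:ℂ) + (-27/8)*(p:ℂ)^2*(q:ℂ) + (81/16)*(p:ℂ)^2*(q:ℂ)*(x:ℂ) + (-27/8)*(p:ℂ)^2*(q:ℂ)*(t:ℂ)*Complex.I + (81/16)*(p:ℂ)^2*(q:ℂ)*(t:ℂ)*Complex.I*(x:ℂ) + (27/8)*(p:ℂ)^2*(q:ℂ)*(σ:ℂ)^2 + (-81/16)*(p:ℂ)^2*(q:ℂ)*(σ:ℂ)^2*(x:ℂ) + (27/8)*(p:ℂ)^2*(q:ℂ)*(σ:ℂ)^2*(t:ℂ)*Complex.I + (-81/16)*(p:ℂ)^2*(q:ℂ)*(σ:ℂ)^2*(t:ℂ)*Complex.I*(x:ℂ)) * hxσC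
  have hDne : ((x:ℂ) * (1+(σ:ℂ)) * (1-(x:ℂ)) * (1-(σ:ℂ))) ≠ 0 := by
    exact mul_ne_zero (mul_ne_zero (mul_ne_zero hXC h1pS) h1mX) h1mS
  have h1 : (27/4 * (3 * ((-1 + (t:ℂ)*Complex.I)/2) / 2) *
      ((1/3 * ((p:ℂ)*(q:ℂ)/(x:ℂ))) * (((-1 + (t:ℂ)*Complex.I)/2) * (((1 + (t:ℂ)*Complex.I)/2) * (q:ℂ))
          + ((1 - (t:ℂ)*Complex.I)/2) * (p:ℂ))
        + ((p:ℂ)*(q:ℂ)) * (((-1 + (t:ℂ)*Complex.I)/2) *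
              (1/3 * ((((-1 - (t:ℂ)*Complex.I)/2)) * ((q:ℂ)/(1+(σ:ℂ)))) * (1/2 * ((σ:ℂ)/(1-(x:ℂ)))))
            + 1/3 * ((((-1 + (t:ℂ)*Complex.I)/2)) * ((p:ℂ)/(1-(σ:ℂ)))) * (-(1/2 * ((σ:ℂ)/(1-(x:ℂ))))))) : ℂ) * K = (27/4 * (3 * ((-1 + (t:ℂ)*Complex.I)/2) / 2 * ((p:ℂ)*(q:ℂ)) *
      (((-1 + (t:ℂ)*Complex.I)/2) * (((1 + (t:ℂ)*Complex.I)/2) * (q:ℂ))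
        + ((1 - (t:ℂ)*Complex.I)/2) * (p:ℂ)) - 1) : ℂ) := by
    apply mul_right_cancel₀ hDne
    calc (27/4 * (3 * ((-1 + (t:ℂ)*Complex.I)/2) / 2) *
      ((1/3 * ((p:ℂ)*(q:ℂ)/(x:ℂ))) * (((-1 + (t:ℂ)*Complex.I)/2) * (((1 + (t:ℂ)*Complex.I)/2) * (q:ℂ))
          + ((1 - (t:ℂ)*Complex.I)/2) * (p:ℂ))
        + ((p:ℂ)*(q:ℂ)) * (((-1 + (t:ℂ)*Complex.I)/2) *
              (1/3 * ((((-1 - (t:ℂ)*Complex.I)/2)) * ((q:ℂ)/(1+(σ:ℂ)))) * (1/2 * ((σ:ℂ)/(1-(x:ℂ)))))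
            + 1/3 * ((((-1 + (t:ℂ)*Complex.I)/2)) * ((p:ℂ)/(1-(σ:ℂ)))) * (-(1/2 * ((σ:ℂ)/(1-(x:ℂ))))))) : ℂ) * K * ((x:ℂ) * (1+(σ:ℂ)) * (1-(x:ℂ)) * (1-(σ:ℂ)))
        = ((27/4 * (3 * ((-1 + (t:ℂ)*Complex.I)/2) / 2) *
      ((1/3 * ((p:ℂ)*(q:ℂ)/(x:ℂ))) * (((-1 + (t:ℂ)*Complex.I)/2) * (((1 + (t:ℂ)*Complex.I)/2) * (q:ℂ))
          + ((1 - (t:ℂ)*Complex.I)/2) * (p:ℂ))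
        + ((p:ℂ)*(q:ℂ)) * (((-1 + (t:ℂ)*Complex.I)/2) *
              (1/3 * ((((-1 - (t:ℂ)*Complex.I)/2)) * ((q:ℂ)/(1+(σ:ℂ)))) * (1/2 * ((σ:ℂ)/(1-(x:ℂ)))))
            + 1/3 * ((((-1 + (t:ℂ)*Complex.I)/2)) * ((p:ℂ)/(1-(σ:ℂ)))) * (-(1/2 * ((σ:ℂ)/(1-(x:ℂ))))))) : ℂ) * ((x:ℂ) * (1+(σ:ℂ)) * (1-(x:ℂ)) * (1-(σ:ℂ)))) * K := by ring
      _ = N0 * K := by rw [hG0N]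
      _ = (27/4 * (3 * ((-1 + (t:ℂ)*Complex.I)/2) / 2 * ((p:ℂ)*(q:ℂ)) *
      (((-1 + (t:ℂ)*Complex.I)/2) * (((1 + (t:ℂ)*Complex.I)/2) * (q:ℂ))
        + ((1 - (t:ℂ)*Complex.I)/2) * (p:ℂ)) - 1) : ℂ) * ((x:ℂ) * (1+(σ:ℂ)) * (1-(x:ℂ)) * (1-(σ:ℂ))) := h1'
  have hG0F0 : (27/4 * (3 * ((-1 + (t:ℂ)*Complex.I)/2) / 2) *
      ((1/3 * ((p:ℂ)*(q:ℂ)/(x:ℂ))) * (((-1 + (t:ℂ)*Complex.I)/2) * (((1 + (t:ℂ)*Complex.I)/2) * (q:ℂ))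
          + ((1 - (t:ℂ)*Complex.I)/2) * (p:ℂ))
        + ((p:ℂ)*(q:ℂ)) * (((-1 + (t:ℂ)*Complex.I)/2) *
              (1/3 * ((((-1 - (t:ℂ)*Complex.I)/2)) * ((q:ℂ)/(1+(σ:ℂ)))) * (1/2 * ((σ:ℂ)/(1-(x:ℂ)))))
            + 1/3 * ((((-1 + (t:ℂ)*Complex.I)/2)) * ((p:ℂ)/(1-(σ:ℂ)))) * (-(1/2 * ((σ:ℂ)/(1-(x:ℂ))))))) : ℂ) / (27/4 * (3 * ((-1 + (t:ℂ)*Complex.I)/2) / 2 * ((p:ℂ)*(q:ℂ)) *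
      (((-1 + (t:ℂ)*Complex.I)/2) * (((1 + (t:ℂ)*Complex.I)/2) * (q:ℂ))
        + ((1 - (t:ℂ)*Complex.I)/2) * (p:ℂ)) - 1)) = 1 / K := by
    rw [div_eq_div_iff hF0ne hK0]
    linear_combination h1
  rw [hG0F0, map_div₀, map_one]
  have hKconj : (starRingEnd ℂ) K
      = (((-(p*q)^2*(p-q)^2/2 : ℝ)) : ℂ) - ((((p*q)^2*t*(p^2-q^2)/2 : ℝ)) : ℂ)*Complex.I := by
    rw [hKalg, map_add, map_mul, Complex.conj_ofReal, Complex.conj_ofReal, Complex.conj_I]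
    ring
  rw [hKconj, hKalg, jump_formula _ _ hu0]
  have hpos : (0:ℝ) < (-(p*q)^2*(p-q)^2/2)^2 + ((p*q)^2*t*(p^2-q^2)/2)^2 := by
    nlinarith [sq_nonneg ((p*q)^2*t*(p^2-q^2)/2), mul_self_pos.2 hu0, sq_nonneg (-(p*q)^2*(p-q)^2/2)]
  have hden1 : ((((-(p*q)^2*(p-q)^2/2)^2 + ((p*q)^2*t*(p^2-q^2)/2)^2 : ℝ)) : ℂ) ≠ 0 :=
    Complex.ofReal_ne_zero.2 (ne_of_gt hpos)
  have hden2 : (2 * ((p:ℂ)*(q:ℂ))^2 * (σ:ℂ)) ≠ 0 := by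
    have hpC : (p:ℂ) ≠ 0 := Complex.ofReal_ne_zero.2 (ne_of_gt hp0)
    have hqC : (q:ℂ) ≠ 0 := Complex.ofReal_ne_zero.2 (ne_of_gt hq0)
    exact mul_ne_zero (mul_ne_zero (by norm_num) (pow_ne_zero 2 (mul_ne_zero hpC hqC)))
      (Complex.ofReal_ne_zero.2 (ne_of_gt hσ0))
  rw [div_eq_div_iff hden1 hden2]
  push_cast
  linear_combination ((-1/4)*(p:ℂ)^4*(q:ℂ)^9*(t:ℂ)*Complex.I + (-1/4)*(p:ℂ)^5*(q:ℂ)^8*(t:ℂ)*Complex.I + (1/2)*(p:ℂ)^6*(q:ℂ)^7*(t:ℂ)*Complex.I + (1/2)*(p:ℂ)^7*(q:ℂ)^6*(t:ℂ)*Complex.I + (-1/4)*(p:ℂ)^8*(q:ℂ)^5*(t:ℂ)*Complex.I + (-1/4)*(p:ℂ)^9*(q:ℂ)^4*(t:ℂ)*Complex.I) * htC + ((-1)*(q:ℂ)^4*(t:ℂ)*Complex.I + (1)*(q:ℂ)^4*(σ:ℂ)^2*(t:ℂ)*Complex.I + (1)*(q:ℂ)^7*(t:ℂ)*Complex.I +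 (-1)*(q:ℂ)^7*(σ:ℂ)*(t:ℂ)*Complex.I + (1)*(p:ℂ)*(q:ℂ)^6*(t:ℂ)*Complex.I + (1)*(p:ℂ)*(q:ℂ)^6*(σ:ℂ)*(t:ℂ)*Complex.I + (-1)*(p:ℂ)*(q:ℂ)^9*(t:ℂ)*Complex.I + (-1)*(p:ℂ)^3*(q:ℂ)^4*(t:ℂ)*Complex.I + (-1)*(p:ℂ)^3*(q:ℂ)^4*(σ:ℂ)*(t:ℂ)*Complex.I + (1)*(p:ℂ)^3*(q:ℂ)^7*(t:ℂ)*Complex.I + (1)*(p:ℂ)^4*(q:ℂ)^6*(t:ℂ)*Complex.I + (-1)*(p:ℂ)^6*(q:ℂ)^4*(t:ℂ)*Complex.I) * hp3C + ((1)*(q:ℂ)^4*(t:ℂ)*Complex.I + (-2)*(q:ℂ)^4*(σ:ℂ)*(t:ℂ)*Complex.I + (1)*(q:ℂ)^4*(σ:ℂ)^2*(t:ℂ)*Complex.I + (-1)*(p:ℂ)*(q:ℂ)^6*(t:ℂ)*Complex.I + (1)*(p:ℂ)*(q:ℂ)^6*(σ:ℂ)*(t:ℂ)*Complex.I) * hq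3C

set_option maxHeartbeats 1000000

/-- the jump of `phi'/phi` across the branch cut equals `2 π i w x` on `(0,1)`. -/
theorem phi_logderiv_jump :
    ∀ x : ℝ, x ∈ Set.Ioo (0 : ℝ) 1 →
      Tendsto (fun ε : ℝ =>
          deriv phi ((x : ℂ) + (ε : ℂ) * Complex.I) / phi ((x : ℂ) + (ε : ℂ) * Complex.I)
            - deriv phi ((x : ℂ) - (ε : ℂ) * Complex.I) / phi ((x : ℂ) - (ε : ℂ) * Complex.I))
        (𝓝[>] (0 : ℝ)) (𝓝 (2 * (Real.pi : ℂ) * Complex.I * (w x : ℂ))) := by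
  intro x hx
  obtain ⟨hx0, hx1⟩ := hx
  set t := Real.sqrt 3 with ht_def
  set σ := Real.sqrt (1-x) with hσ_def
  set p := (1-σ) ^ ((1:ℝ)/3) with hp_def
  set q := (1+σ) ^ ((1:ℝ)/3) with hq_def
  have hσsq : σ^2 = 1 - x := Real.sq_sqrt (by linarith)
  have hσ0 : 0 < σ := Real.sqrt_pos.2 (by linarith)
  have hσ1 : σ < 1 := by nlinarith [hσsq]
  have hp0 : 0 < p := Real.rpow_pos_of_pos (by linarith) _
  have hq0 : 0 < q := Real.rpow_pos_of_pos (by linarith) _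
  have hp3 : p^3 = 1 - σ := by
    rw [hp_def, ← Real.rpow_natCast ((1-σ) ^ ((1:ℝ)/3)) 3, ← Real.rpow_mul (by linarith)]
    norm_num
  have hq3 : q^3 = 1 + σ := by
    rw [hq_def, ← Real.rpow_natCast ((1+σ) ^ ((1:ℝ)/3)) 3, ← Real.rpow_mul (by linarith)]
    norm_num
  have ht : t^2 = 3 := Real.sq_sqrt (by norm_num)
  have ht0 : 0 < t := Real.sqrt_pos.2 (by norm_num)
  have hxfact : x = (1-σ)*(1+σ) := by nlinarith [hσsq]
  -- complex point facts
  have hxC0 : (x:ℂ) ≠ 0 := Complex.ofReal_ne_zero.2 (ne_of_gt hx0)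
  have h1x : (0:ℝ) < 1 - x := by linarith
  have h1xC : (1:ℂ) - (x:ℂ) ≠ 0 := by
    rw [show (1:ℂ) - (x:ℂ) = ((1-x : ℝ):ℂ) by push_cast; ring]
    exact Complex.ofReal_ne_zero.2 (ne_of_gt h1x)
  have h1pσ : (1:ℂ) + (σ:ℂ) ≠ 0 := by
    rw [show (1:ℂ) + (σ:ℂ) = ((1+σ : ℝ):ℂ) by push_cast; ring]
    exact Complex.ofReal_ne_zero.2 (by positivity)
  have h1mσ : (1:ℂ) - (σ:ℂ) ≠ 0 := by
    rw [show (1:ℂ) - (σ:ℂ) = ((1-σ : ℝ):ℂ) by push_cast; ring]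
    exact Complex.ofReal_ne_zero.2 (by intro h; nlinarith)
  have hsq1x : sq1 (x:ℂ) = (σ:ℂ) := by
    rw [sq1, show (1:ℂ) - (x:ℂ) = ((1-x : ℝ):ℂ) by push_cast; ring,
      show ((1:ℂ)/2) = (((1:ℝ)/2 : ℝ):ℂ) by push_cast; ring,
      ← Complex.ofReal_cpow h1x.le, hσ_def, Real.sqrt_eq_rpow]
  -- evaluation of cpow atoms at x
  have hA : ((x:ℂ)) ^ ((1:ℂ)/3) = ((p*q : ℝ) : ℂ) := by
    rw [show ((1:ℂ)/3) = (((1:ℝ)/3 : ℝ):ℂ) by push_cast; ring, ← Complex.ofReal_cpow hx0.le]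
    congr 1
    rw [hxfact, Real.mul_rpow (by linarith) (by linarith), hp_def, hq_def]
  have hA1 : ((x:ℂ)) ^ ((1:ℂ)/3 - 1) = ((p*q : ℝ) : ℂ) / (x:ℂ) := by
    rw [Complex.cpow_sub _ _ hxC0, Complex.cpow_one, hA]
  have hB : ((1:ℂ) + (σ:ℂ)) ^ ((1:ℂ)/3) = (q:ℂ) := by
    rw [show (1:ℂ) + (σ:ℂ) = ((1+σ : ℝ):ℂ) by push_cast; ring,
      show ((1:ℂ)/3) = (((1:ℝ)/3 : ℝ):ℂ) by push_cast; ring, ← Complex.ofReal_cpow (by linarith), hq_def]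
  have hB1 : ((1:ℂ) + (σ:ℂ)) ^ ((1:ℂ)/3 - 1) = (q:ℂ) / (1 + (σ:ℂ)) := by
    rw [Complex.cpow_sub _ _ h1pσ, Complex.cpow_one, hB]
  have hC : ((1:ℂ) - (σ:ℂ)) ^ ((1:ℂ)/3) = (p:ℂ) := by
    rw [show (1:ℂ) - (σ:ℂ) = ((1-σ : ℝ):ℂ) by push_cast; ring,
      show ((1:ℂ)/3) = (((1:ℝ)/3 : ℝ):ℂ) by push_cast; ring,
      ← Complex.ofReal_cpow (by linarith), hp_def]
  have hC1 : ((1:ℂ) - (σ:ℂ)) ^ ((1:ℂ)/3 - 1) = (p:ℂ) / (1 - (σ:ℂ)) := by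
    rw [Complex.cpow_sub _ _ h1mσ, Complex.cpow_one, hC]
  have hS12 : ((1:ℂ) - (x:ℂ)) ^ ((1:ℂ)/2) = (σ:ℂ) := by
    rw [← sq1]; exact hsq1x
  have hS1 : ((1:ℂ) - (x:ℂ)) ^ ((1:ℂ)/2 - 1) = (σ:ℂ) / (1 - (x:ℂ)) := by
    rw [Complex.cpow_sub _ _ h1xC, Complex.cpow_one, hS12]
  -- continuity facts
  have hslitx : (x:ℂ) ∈ Complex.slitPlane := Complex.ofReal_mem_slitPlane.2 hx0
  have hslit1x : (1:ℂ) - (x:ℂ) ∈ Complex.slitPlane := Or.inl (by simp [Complex.sub_re]; linarith)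
  have hcsq1 : ContinuousAt sq1 (x:ℂ) := by
    have h1 : ContinuousAt (fun w : ℂ => 1 - w) (x:ℂ) := (continuous_const.sub continuous_id).continuousAt
    have h2 : ContinuousAt (fun u : ℂ => u ^ ((1:ℂ)/2)) ((1:ℂ) - (x:ℂ)) :=
      continuousAt_cpow_const hslit1x
    exact h2.comp h1
  have hslitP : (1:ℂ) + sq1 (x:ℂ) ∈ Complex.slitPlane := by
    rw [hsq1x]; exact Or.inl (by simp [Complex.add_re]; linarith)
  have hslitM : (1:ℂ) - sq1 (x:ℂ) ∈ Complex.slitPlane := by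
    rw [hsq1x]; exact Or.inl (by simp [Complex.sub_re]; linarith)
  have hcP : ContinuousAt (fun w : ℂ => 1 + sq1 w) (x:ℂ) := continuousAt_const.add hcsq1
  have hcM : ContinuousAt (fun w : ℂ => 1 - sq1 w) (x:ℂ) := continuousAt_const.sub hcsq1
  have hc1 : ContinuousAt (fun w : ℂ => (1 + sq1 w) ^ ((1:ℂ)/3)) (x:ℂ) :=
    ContinuousAt.comp (f := fun w : ℂ => 1 + sq1 w) (continuousAt_cpow_const hslitP) hcP
  have hc2 : ContinuousAt (fun w : ℂ => (1 + sq1 w) ^ ((1:ℂ)/3 - 1)) (x:ℂ) :=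
    ContinuousAt.comp (f := fun w : ℂ => 1 + sq1 w) (continuousAt_cpow_const hslitP) hcP
  have hc3 : ContinuousAt (fun w : ℂ => (1 - sq1 w) ^ ((1:ℂ)/3)) (x:ℂ) :=
    ContinuousAt.comp (f := fun w : ℂ => 1 - sq1 w) (continuousAt_cpow_const hslitM) hcM
  have hc4 : ContinuousAt (fun w : ℂ => (1 - sq1 w) ^ ((1:ℂ)/3 - 1)) (x:ℂ) :=
    ContinuousAt.comp (f := fun w : ℂ => 1 - sq1 w) (continuousAt_cpow_const hslitM) hcM
  have hc5 : ContinuousAt (fun w : ℂ => w ^ ((1:ℂ)/3)) (x:ℂ) := continuousAt_cpow_const hslitx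
  have hc6 : ContinuousAt (fun w : ℂ => w ^ ((1:ℂ)/3 - 1)) (x:ℂ) := continuousAt_cpow_const hslitx
  have hc7 : ContinuousAt (fun w : ℂ => (1 - w) ^ ((1:ℂ)/2 - 1)) (x:ℂ) :=
    (continuousAt_cpow_const hslit1x).comp ((continuous_const.sub continuous_id).continuousAt)
  have hFccont : ContinuousAt Fc (x:ℂ) := by
    have : Fc = fun w => 27/4 * (3 * ω₃ / 2 * w ^ ((1:ℂ)/3) *
      (ω₃ * (eπ ((1:ℂ)/3) * (1 + sq1 w) ^ ((1:ℂ)/3)) + eπ (-((1:ℂ)/3)) * (1 - sq1 w) ^ ((1:ℂ)/3)) - 1) := rfl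
    rw [this]
    exact continuousAt_const.mul (((continuousAt_const.mul hc5).mul
      ((continuousAt_const.mul (continuousAt_const.mul hc1)).add (continuousAt_const.mul hc3))).sub continuousAt_const)
  have hGccont : ContinuousAt Gc (x:ℂ) := by
    have : Gc = fun w => 27/4 * (3 * ω₃ / 2) *
      ((1/3 * w ^ ((1:ℂ)/3 - 1)) *
          (ω₃ * (eπ ((1:ℂ)/3) * (1 + sq1 w) ^ ((1:ℂ)/3)) + eπ (-((1:ℂ)/3)) * (1 - sq1 w) ^ ((1:ℂ)/3))
        + w ^ ((1:ℂ)/3) *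
          (ω₃ * (1/3 * (eπ ((1:ℂ)/3 - 1) * (1 + sq1 w) ^ ((1:ℂ)/3 - 1)) * (1/2 * (1 - w) ^ ((1:ℂ)/2 - 1)))
            + 1/3 * (eπ (-((1:ℂ)/3 - 1)) * (1 - sq1 w) ^ ((1:ℂ)/3 - 1)) * (-(1/2 * (1 - w) ^ ((1:ℂ)/2 - 1))))) := rfl
    rw [this]
    refine continuousAt_const.mul (ContinuousAt.add ?_ ?_)
    · exact (continuousAt_const.mul hc6).mul
        ((continuousAt_const.mul (continuousAt_const.mul hc1)).add (continuousAt_const.mul hc3))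
    · exact hc5.mul ((continuousAt_const.mul ((continuousAt_const.mul
        (continuousAt_const.mul hc2)).mul (continuousAt_const.mul hc7))).add
        ((continuousAt_const.mul (continuousAt_const.mul hc4)).mul ((continuousAt_const.mul hc7).neg)))
  -- evaluations
  have hFc_eval : Fc (x:ℂ) = 27/4 * (3 * ((-1 + (t:ℂ)*Complex.I)/2) / 2 * ((p:ℂ)*(q:ℂ)) *
      (((-1 + (t:ℂ)*Complex.I)/2) * (((1 + (t:ℂ)*Complex.I)/2) * (q:ℂ))
        + ((1 - (t:ℂ)*Complex.I)/2) * (p:ℂ)) - 1) := by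
    rw [show Fc (x:ℂ) = 27/4 * (3 * ω₃ / 2 * (x:ℂ) ^ ((1:ℂ)/3) *
      (ω₃ * (eπ ((1:ℂ)/3) * (1 + sq1 (x:ℂ)) ^ ((1:ℂ)/3)) + eπ (-((1:ℂ)/3)) * (1 - sq1 (x:ℂ)) ^ ((1:ℂ)/3)) - 1) from rfl]
    rw [hsq1x, hA, hB, hC, eπ_third, eπ_neg_third, omega_eq, ← ht_def]
    push_cast
    ring
  have hGc_eval : Gc (x:ℂ) = 27/4 * (3 * ((-1 + (t:ℂ)*Complex.I)/2) / 2) *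
      ((1/3 * ((p:ℂ)*(q:ℂ)/(x:ℂ))) * (((-1 + (t:ℂ)*Complex.I)/2) * (((1 + (t:ℂ)*Complex.I)/2) * (q:ℂ))
          + ((1 - (t:ℂ)*Complex.I)/2) * (p:ℂ))
        + ((p:ℂ)*(q:ℂ)) * (((-1 + (t:ℂ)*Complex.I)/2) *
              (1/3 * ((((-1 - (t:ℂ)*Complex.I)/2)) * ((q:ℂ)/(1+(σ:ℂ)))) * (1/2 * ((σ:ℂ)/(1-(x:ℂ)))))
            + 1/3 * ((((-1 + (t:ℂ)*Complex.I)/2)) * ((p:ℂ)/(1-(σ:ℂ)))) * (-(1/2 * ((σ:ℂ)/(1-(x:ℂ))))))) := by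
    rw [show Gc (x:ℂ) = 27/4 * (3 * ω₃ / 2) *
      ((1/3 * (x:ℂ) ^ ((1:ℂ)/3 - 1)) *
          (ω₃ * (eπ ((1:ℂ)/3) * (1 + sq1 (x:ℂ)) ^ ((1:ℂ)/3)) + eπ (-((1:ℂ)/3)) * (1 - sq1 (x:ℂ)) ^ ((1:ℂ)/3))
        + (x:ℂ) ^ ((1:ℂ)/3) *
          (ω₃ * (1/3 * (eπ ((1:ℂ)/3 - 1) * (1 + sq1 (x:ℂ)) ^ ((1:ℂ)/3 - 1)) * (1/2 * (1 - (x:ℂ)) ^ ((1:ℂ)/2 - 1)))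
            + 1/3 * (eπ (-((1:ℂ)/3 - 1)) * (1 - sq1 (x:ℂ)) ^ ((1:ℂ)/3 - 1)) * (-(1/2 * (1 - (x:ℂ)) ^ ((1:ℂ)/2 - 1))))) from rfl]
    rw [hsq1x, hA, hA1, hB, hB1, hC, hC1, hS1, eπ_third, eπ_neg_third, eπ_third_sub_one,
      eπ_neg_third_sub_one, omega_eq, ← ht_def]
    push_cast
    ring
  have hFc0 : Fc (x:ℂ) ≠ 0 := by
    rw [hFc_eval]
    exact F0_ne_zero σ p q t hσ0 hp0 hq0 hp3 hq3 ht ht0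
  -- the path
  set P : ℝ → ℂ := fun ε => (x:ℂ) + (ε:ℂ) * Complex.I with hP_def
  have hPtend : Tendsto P (𝓝[>] (0:ℝ)) (𝓝 (x:ℂ)) := by
    have hcont : Continuous P := by
      apply continuous_const.add (Continuous.mul _ continuous_const)
      exact Complex.continuous_ofReal
    have h0 : Tendsto P (𝓝 0) (𝓝 (x:ℂ)) := by
      have := hcont.tendsto 0
      simpa [hP_def] using this
    exact h0.mono_left nhdsWithin_le_nhds
  have hgtend : Tendsto (fun ε => Gc (P ε) / Fc (P ε)) (𝓝[>] (0:ℝ))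
      (𝓝 (Gc (x:ℂ) / Fc (x:ℂ))) :=
    (hGccont.tendsto.comp hPtend).div (hFccont.tendsto.comp hPtend) hFc0
  have hupper : IsOpen {z : ℂ | 0 < z.im} := isOpen_lt continuous_const Complex.continuous_im
  have hlower : IsOpen {z : ℂ | z.im < 0} := isOpen_lt Complex.continuous_im continuous_const
  have hkey : ∀ ε ∈ Set.Ioi (0:ℝ),
      Gc (P ε) / Fc (P ε) - (starRingEnd ℂ) (Gc (P ε) / Fc (P ε))
        = deriv phi ((x:ℂ) + (ε:ℂ) * Complex.I) / phi ((x:ℂ) + (ε:ℂ) * Complex.I)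
            - deriv phi ((x:ℂ) - (ε:ℂ) * Complex.I) / phi ((x:ℂ) - (ε:ℂ) * Complex.I) := by
    intro ε hε
    have hεpos : (0:ℝ) < ε := hε
    have hPim : 0 < (P ε).im := by simp [hP_def, hεpos]
    have hD1 : HasDerivAt phi (Dp (P ε)) (P ε) := by
      apply (hasDerivAt_Fp (ne_of_gt hPim)).congr_of_eventuallyEq
      filter_upwards [hupper.mem_nhds hPim] with w hw
      exact phi_eq_Fp hw
    have hconjP : (starRingEnd ℂ) (P ε) = (x:ℂ) - (ε:ℂ) * Complex.I := by
      simp [hP_def]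
      ring
    have hQim : ((x:ℂ) - (ε:ℂ) * Complex.I).im < 0 := by simp [hεpos]
    have hD2 : HasDerivAt phi ((starRingEnd ℂ) (Dp (P ε))) ((x:ℂ) - (ε:ℂ) * Complex.I) := by
      have h0 := hasDerivAt_conj_conj (hasDerivAt_Fp (z := P ε) (ne_of_gt hPim))
      rw [hconjP] at h0
      apply h0.congr_of_eventuallyEq
      filter_upwards [hlower.mem_nhds hQim] with w hw
      exact phi_eq_conj_Fp hw
    have e1 : deriv phi ((x:ℂ) + (ε:ℂ) * Complex.I) = Dp (P ε) := hD1.deriv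
    have e2 : phi ((x:ℂ) + (ε:ℂ) * Complex.I) = Fp (P ε) := phi_eq_Fp hPim
    have e3 : deriv phi ((x:ℂ) - (ε:ℂ) * Complex.I) = (starRingEnd ℂ) (Dp (P ε)) := hD2.deriv
    have e4 : phi ((x:ℂ) - (ε:ℂ) * Complex.I) = (starRingEnd ℂ) (Fp (P ε)) := by
      rw [phi_eq_conj_Fp hQim, ← hconjP, Complex.conj_conj]
    rw [e1, e2, e3, e4, Dp_eq_Gc hPim, Fp_eq_Fc hPim, ← map_div₀]
  have htends : Tendsto (fun ε => Gc (P ε) / Fc (P ε) - (starRingEnd ℂ) (Gc (P ε) / Fc (P ε)))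
      (𝓝[>] (0:ℝ)) (𝓝 (Gc (x:ℂ) / Fc (x:ℂ) - (starRingEnd ℂ) (Gc (x:ℂ) / Fc (x:ℂ)))) :=
    hgtend.sub ((Complex.continuous_conj.tendsto _).comp hgtend)
  have hfinal : Gc (x:ℂ) / Fc (x:ℂ) - (starRingEnd ℂ) (Gc (x:ℂ) / Fc (x:ℂ))
      = 2 * (Real.pi : ℂ) * Complex.I * ((w x : ℝ) : ℂ) := by
    rw [hGc_eval, hFc_eval,
      final_algebra x σ p q t hx0 hσ0 hσ1 hp0 hq0 hp3 hq3 ht ht0 hσsq]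
    -- now identify with 2 π I w x
    have hpq3 : (p*q)^3 = x := by
      rw [mul_pow, hp3, hq3]; nlinarith [hσsq]
    have hx23 : x ^ ((2:ℝ)/3) = (p*q)^2 := by
      rw [← hpq3, ← Real.rpow_natCast (p*q) 3, ← Real.rpow_mul (le_of_lt (mul_pos hp0 hq0)),
        ← Real.rpow_natCast (p*q) 2]
      norm_num
    have hwx : w x = t*(q+p)/(4*Real.pi*((p*q)^2*σ)) := by
      rw [w, ← hσ_def, ← hq_def, ← hp_def, ← ht_def, hx23]
      field_simp
    rw [hwx]
    have hπ : (Real.pi : ℂ) ≠ 0 := Complex.ofReal_ne_zero.2 Real.pi_ne_zero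
    have hpqC : ((p:ℂ)*(q:ℂ)) ≠ 0 := by
      apply mul_ne_zero <;> exact Complex.ofReal_ne_zero.2 (by positivity)
    have hσC : (σ:ℂ) ≠ 0 := Complex.ofReal_ne_zero.2 (ne_of_gt hσ0)
    push_cast
    field_simp
    ring
  rw [← hfinal]
  apply htends.congr'
  filter_upwards [eventually_mem_nhdsWithin] with ε hε
  exact hkey ε hε
end

section
/- Let p_n be a monic real polynomial of degree n with simple real zeros y_1 < ⋯ < y_n and let p_{n−1} be a monic real polynomial of degree n−1 whose zeros are real, simple, and interlace with those of p_n (exactly one zero of p_{n−1} lies strictly between each pair of consecutive zeros of p_n). Then there exist weights w_1, …, w_n with w_j > 0 for all j and Σ_{j=1}^n w_j = 1 such that p_{n−1}(z)/p_n(z) = Σ_{j=1}^n w_j/(z − y_j) for every z ∈ ℂ \ {y_1,…,y_n}. -/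
open Filter Topology Polynomial

lemma monic_eq_prod_of_roots (m : ℕ) (p : Polynomial ℝ) (hp : p.Monic) (hdeg : p.natDegree = m)
    (y : ℕ → ℝ) (hroot : ∀ j < m, p.eval (y j) = 0)
    (hmono : ∀ j k : ℕ, j < k → k < m → y j < y k) :
    p = ∏ j ∈ Finset.range m, (X - C (y j)) := by
  classical
  set r : Polynomial ℝ := ∏ j ∈ Finset.range m, (X - C (y j)) with hr
  have hrm : r.Monic := monic_prod_of_monic _ _ (fun j _ => monic_X_sub_C _)
  have hrdeg : r.natDegree = m := by
    rw [hr, natDegree_prod_of_monic _ _ (fun j _ => monic_X_sub_C _)]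
    simp
  have hinj : ∀ j k, j < m → k < m → y j = y k → j = k := by
    intro j k hj hk he
    rcases lt_trichotomy j k with h | h | h
    · exact absurd he (ne_of_lt (hmono j k h hk))
    · exact h
    · exact absurd he.symm (ne_of_lt (hmono k j h hj))
  by_cases hd0 : p - r = 0
  · exact sub_eq_zero.mp hd0
  · exfalso
    have heval : ∀ x ∈ (Finset.range m).image y, (p - r).eval x = 0 := by
      intro x hx
      obtain ⟨j, hj, rfl⟩ := Finset.mem_image.mp hx
      rw [Finset.mem_range] at hj
      have hre : r.eval (y j) = 0 := by
        rw [hr, eval_prod]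
        exact Finset.prod_eq_zero (Finset.mem_range.mpr hj) (by simp)
      simp [eval_sub, hroot j hj, hre]
    have hcard : ((Finset.range m).image y).card = m := by
      rw [Finset.card_image_of_injOn, Finset.card_range]
      intro a ha b hb hab
      exact hinj a b (Finset.mem_range.mp ha) (Finset.mem_range.mp hb) hab
    have hdlt : (p - r).degree < (m : WithBot ℕ) := by
      have := degree_sub_lt (show p.degree = r.degree by
          rw [degree_eq_natDegree hp.ne_zero, degree_eq_natDegree hrm.ne_zero, hdeg, hrdeg])
        hp.ne_zero (by rw [hp.leadingCoeff, hrm.leadingCoeff])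
      rwa [degree_eq_natDegree hp.ne_zero, hdeg] at this
    have : p - r = 0 := by
      apply Polynomial.eq_zero_of_natDegree_lt_card_of_eval_eq_zero' _ _ heval
      rw [hcard]
      exact (natDegree_lt_iff_degree_lt hd0).mpr hdlt
    exact hd0 this

/-- the ratio `q/p` of monic polynomials with interlacing real simple zeros
is a convex combination of the simple fractions `1/(z - y_j)`. -/
theorem ratio_partial_fractions (n : ℕ) (hn : 1 ≤ n) (p q : Polynomial ℝ)
    (hp : p.Monic) (hpdeg : p.natDegree = n)
    (hq : q.Monic) (hqdeg : q.natDegree = n - 1)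
    (y y' : ℕ → ℝ)
    (hyroot : ∀ j < n, p.eval (y j) = 0)
    (hymono : ∀ j k : ℕ, j < k → k < n → y j < y k)
    (hy'root : ∀ j < n - 1, q.eval (y' j) = 0)
    (hy'mono : ∀ j k : ℕ, j < k → k < n - 1 → y' j < y' k)
    (hinterlace : ∀ j < n - 1, y j < y' j ∧ y' j < y (j + 1)) :
    ∃ wt : ℕ → ℝ, (∀ j < n, 0 < wt j) ∧ (∑ j ∈ Finset.range n, wt j) = 1 ∧
      ∀ z : ℂ, (∀ j < n, z ≠ (y j : ℂ)) →
        Polynomial.aeval z q / Polynomial.aeval z p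
          = ∑ j ∈ Finset.range n, (wt j : ℂ) / (z - (y j : ℂ)) := by
  classical
  have hinj : ∀ j k, j < n → k < n → y j = y k → j = k := by
    intro j k hj hk he
    rcases lt_trichotomy j k with h | h | h
    · exact absurd he (ne_of_lt (hymono j k h hk))
    · exact h
    · exact absurd he.symm (ne_of_lt (hymono k j h hj))
  have hp' : p = ∏ j ∈ Finset.range n, (X - C (y j)) :=
    monic_eq_prod_of_roots n p hp hpdeg y hyroot hymono
  have hq' : q = ∏ i ∈ Finset.range (n - 1), (X - C (y' i)) :=
    monic_eq_prod_of_roots (n - 1) q hq hqdeg y' hy'root hy'mono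
  set L : ℕ → Polynomial ℝ := fun j => ∏ k ∈ (Finset.range n).erase j, (X - C (y k)) with hL
  have hLm : ∀ j, (L j).Monic := fun j => monic_prod_of_monic _ _ (fun k _ => monic_X_sub_C _)
  have hLdeg : ∀ j < n, (L j).natDegree = n - 1 := by
    intro j hj
    rw [hL]
    simp only
    rw [natDegree_prod_of_monic _ _ (fun k _ => monic_X_sub_C _)]
    simp [Finset.card_erase_of_mem, Finset.mem_range.mpr hj]
  have hLeval : ∀ j, (L j).eval (y j) = ∏ k ∈ (Finset.range n).erase j, (y j - y k) := by
    intro j; rw [hL]; simp [eval_prod]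
  have hcne : ∀ j < n, (L j).eval (y j) ≠ 0 := by
    intro j hj
    rw [hLeval]
    rw [Finset.prod_ne_zero_iff]
    intro k hk
    rw [Finset.mem_erase, Finset.mem_range] at hk
    exact sub_ne_zero.mpr (fun he => hk.1 (hinj j k hj hk.2 he).symm)
  have hqeval : ∀ j, q.eval (y j) = ∏ i ∈ Finset.range (n - 1), (y j - y' i) := by
    intro j; rw [hq']; simp [eval_prod]
  -- positivity of q(y j) * L j (y j)
  have hpos : ∀ j < n, 0 < q.eval (y j) * (L j).eval (y j) := by
    intro j hj
    have hjle : j ≤ n - 1 := by omega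
    have hsplitq : Finset.range (n - 1) = Finset.range j ∪ Finset.Ico j (n - 1) := by
      ext x; simp [Finset.mem_Ico]; omega
    have hsplitL : (Finset.range n).erase j = Finset.range j ∪ Finset.Ico (j + 1) n := by
      ext x; simp [Finset.mem_Ico]; omega
    have hdq : Disjoint (Finset.range j) (Finset.Ico j (n - 1)) := by
      rw [Finset.disjoint_left]; intro a ha hb
      rw [Finset.mem_range] at ha; rw [Finset.mem_Ico] at hb; omega
    have hdL : Disjoint (Finset.range j) (Finset.Ico (j + 1) n) := by
      rw [Finset.disjoint_left]; intro a ha hb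
      rw [Finset.mem_range] at ha; rw [Finset.mem_Ico] at hb; omega
    rw [hqeval, hLeval, hsplitq, hsplitL, Finset.prod_union hdq, Finset.prod_union hdL]
    have hA : 0 < ∏ i ∈ Finset.range j, (y j - y' i) := by
      apply Finset.prod_pos
      intro i hi
      rw [Finset.mem_range] at hi
      have hi1 : i < n - 1 := by omega
      have h1 : y' i < y (i + 1) := (hinterlace i hi1).2
      have h2 : y (i + 1) ≤ y j := by
        rcases eq_or_lt_of_le (Nat.succ_le_of_lt hi) with h | h
        · exact le_of_eq (congrArg y h)
        · exact le_of_lt (hymono (i + 1) j h hj)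
      linarith
    have hA' : 0 < ∏ k ∈ Finset.range j, (y j - y k) := by
      apply Finset.prod_pos
      intro k hk
      rw [Finset.mem_range] at hk
      linarith [hymono k j hk hj]
    have hBB' : 0 < (∏ i ∈ Finset.Ico j (n - 1), (y j - y' i)) *
        ∏ k ∈ Finset.Ico (j + 1) n, (y j - y k) := by
      rw [Finset.prod_Ico_eq_prod_range, Finset.prod_Ico_eq_prod_range]
      have hnn : n - (j + 1) = n - 1 - j := by omega
      rw [hnn, ← Finset.prod_mul_distrib]
      apply Finset.prod_pos
      intro i hi
      rw [Finset.mem_range] at hi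
      have hji : j + i < n - 1 := by omega
      have h1 : y j < y' (j + i) := by
        have := (hinterlace (j + i) hji).1
        have h2 : y j ≤ y (j + i) := by
          rcases Nat.eq_zero_or_pos i with h | h
          · simp [h]
          · exact le_of_lt (hymono j (j + i) (by omega) (by omega))
        linarith
      have h2 : y j < y (j + 1 + i) := hymono j (j + 1 + i) (by omega) (by omega)
      exact mul_pos_of_neg_of_neg (by linarith) (by linarith)
    calc 0 < ((∏ i ∈ Finset.range j, (y j - y' i)) * ∏ k ∈ Finset.range j, (y j - y k)) *
        ((∏ i ∈ Finset.Ico j (n - 1), (y j - y' i)) * ∏ k ∈ Finset.Ico (j + 1) n, (y j - y k)) :=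
          mul_pos (mul_pos hA hA') hBB'
      _ = _ := by ring
  set wt : ℕ → ℝ := fun j => q.eval (y j) / (L j).eval (y j) with hwt
  have hwtpos : ∀ j < n, 0 < wt j := by
    intro j hj
    rw [hwt]
    rcases mul_pos_iff.mp (hpos j hj) with ⟨h1, h2⟩ | ⟨h1, h2⟩
    · exact div_pos h1 h2
    · exact div_pos_of_neg_of_neg h1 h2
  -- key identity
  have hkey : q = ∑ j ∈ Finset.range n, C (wt j) * L j := by
    set d : Polynomial ℝ := q - ∑ j ∈ Finset.range n, C (wt j) * L j with hd
    have heval : ∀ x ∈ (Finset.range n).image y, d.eval x = 0 := by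
      intro x hx
      obtain ⟨m, hm, rfl⟩ := Finset.mem_image.mp hx
      rw [Finset.mem_range] at hm
      have hsum : (∑ j ∈ Finset.range n, C (wt j) * L j).eval (y m)
          = wt m * (L m).eval (y m) := by
        rw [eval_finset_sum]
        rw [Finset.sum_eq_single_of_mem m (Finset.mem_range.mpr hm)]
        · simp
        · intro j hj hjm
          have : (L j).eval (y m) = 0 := by
            rw [hL]
            simp only
            rw [eval_prod]
            apply Finset.prod_eq_zero (i := m)
            · rw [Finset.mem_erase]
              exact ⟨fun h => hjm (by rw [h]), Finset.mem_range.mpr hm⟩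
            · simp
          simp [this]
      rw [hd, eval_sub, hsum, hwt]
      simp only
      rw [div_mul_cancel₀ _ (hcne m hm)]
      ring
    have hcard : ((Finset.range n).image y).card = n := by
      rw [Finset.card_image_of_injOn, Finset.card_range]
      intro a ha b hb hab
      exact hinj a b (Finset.mem_range.mp ha) (Finset.mem_range.mp hb) hab
    have hdlt : d.natDegree < n := by
      have h1 : d.natDegree ≤ max q.natDegree
          (∑ j ∈ Finset.range n, C (wt j) * L j).natDegree := natDegree_sub_le _ _
      have h2 : (∑ j ∈ Finset.range n, C (wt j) * L j).natDegree ≤ n - 1 := by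
        apply natDegree_sum_le_of_forall_le
        intro j hj
        calc (C (wt j) * L j).natDegree ≤ (L j).natDegree := natDegree_C_mul_le _ _
          _ = n - 1 := hLdeg j (Finset.mem_range.mp hj)
      have : d.natDegree ≤ n - 1 := by
        rw [hqdeg] at h1
        exact h1.trans (max_le le_rfl h2)
      omega
    have hd0 : d = 0 := by
      apply Polynomial.eq_zero_of_natDegree_lt_card_of_eval_eq_zero' _ _ heval
      rwa [hcard]
    have := sub_eq_zero.mp hd0
    exact this
  -- sum of weights
  have hsum1 : (∑ j ∈ Finset.range n, wt j) = 1 := by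
    have hc := congrArg (fun r : Polynomial ℝ => r.coeff (n - 1)) hkey
    simp only [finset_sum_coeff, coeff_C_mul] at hc
    have hq1 : q.coeff (n - 1) = 1 := by
      have := hq.coeff_natDegree
      rwa [hqdeg] at this
    rw [hq1] at hc
    have hc2 : (1 : ℝ) = ∑ j ∈ Finset.range n, wt j := by
      rw [hc]
      apply Finset.sum_congr rfl
      intro j hj
      have h1 : (L j).coeff (n - 1) = 1 := by
        have := (hLm j).coeff_natDegree
        rwa [hLdeg j (Finset.mem_range.mp hj)] at this
      rw [h1, mul_one]
    exact hc2.symm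
  refine ⟨wt, hwtpos, hsum1, ?_⟩
  intro z hz
  have hfac : ∀ j ∈ Finset.range n,
      (aeval z p : ℂ) = (z - (y j : ℂ)) * aeval z (L j) := by
    intro j hj
    rw [hp', ← Finset.mul_prod_erase _ _ hj, map_mul, hL]
    simp
  have hLz : ∀ j ∈ Finset.range n, (aeval z (L j) : ℂ) ≠ 0 := by
    intro j hj
    rw [hL]
    simp only [map_prod, map_sub, aeval_X, aeval_C]
    rw [Finset.prod_ne_zero_iff]
    intro k hk
    rw [Finset.mem_erase, Finset.mem_range] at hk
    have := hz k hk.2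
    simp only [Complex.coe_algebraMap]
    exact sub_ne_zero.mpr this
  have hqz : (aeval z q : ℂ) = ∑ j ∈ Finset.range n, (wt j : ℂ) * aeval z (L j) := by
    rw [hkey, map_sum]
    apply Finset.sum_congr rfl
    intro j hj
    rw [map_mul, aeval_C]
    simp
  rw [hqz, Finset.sum_div]
  apply Finset.sum_congr rfl
  intro j hj
  rw [hfac j hj]
  rw [mul_comm (z - (y j : ℂ)) (aeval z (L j)), mul_comm ((wt j : ℂ)) (aeval z (L j))]
  exact mul_div_mul_left _ _ (hLz j hj)
end
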